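/- arXiv:1809.00943 — 3 statements merged into one kernel-verified Lean document; each statement's English description precedes it below -/
import Mathlib

section
/- The modal logics KD and KDB enjoy ULIP; moreover, in each of these logics L, for every formula φ and all finite sets P, Q of propositional variables there exists a uniform Lyndon interpolant θ of (φ,P,Q) in L with d(θ) ≤ d(φ). -/
/-- Modal formulas: propositional variables, ⊥, →, □. -/
inductive Formula : Type
  | var : ℕ → Formula
  | bot : Formula
  | imp : Formula → Formula → Formula
  | box : Formula → Formula
  deriving DecidableEq

namespace Formula

def neg (φ : Formula) : Formula := φ.imp bot

def top : Formula := neg bot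

def and (φ ψ : Formula) : Formula := (φ.imp ψ.neg).neg

def iff (φ ψ : Formula) : Formula := (φ.imp ψ).and (ψ.imp φ)

def dia (φ : Formula) : Formula := φ.neg.box.neg

/-- Variables occurring positively (`true`) / negatively (`false`). -/
def vsgn : Formula → Bool → Finset ℕ
  | var p, true => {p}
  | var _, false => ∅
  | bot, _ => ∅
  | imp φ ψ, b => vsgn φ (!b) ∪ vsgn ψ b
  | box φ, b => vsgn φ b

def vpos (φ : Formula) : Finset ℕ := vsgn φ true
def vneg (φ : Formula) : Finset ℕ := vsgn φ false
def vars (φ : Formula) : Finset ℕ := vpos φ ∪ vneg φ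

/-- Modal depth. -/
def depth : Formula → ℕ
  | var _ => 0
  | bot => 0
  | imp φ ψ => max (depth φ) (depth ψ)
  | box φ => depth φ + 1

/-- Uniform substitution. -/
def subst (σ : ℕ → Formula) : Formula → Formula
  | var p => σ p
  | bot => bot
  | imp φ ψ => (subst σ φ).imp (subst σ ψ)
  | box φ => (subst σ φ).box

/-- The set of subformulas. -/
def subfmls : Formula → Finset Formula
  | var p => {var p}
  | bot => {bot}
  | imp φ ψ => insert (imp φ ψ) (subfmls φ ∪ subfmls ψ)
  | box φ => insert (box φ) (subfmls φ)

/-- n(φ) = |{ψ : □ψ ∈ Sub(φ)}|. -/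
def boxCount (φ : Formula) : ℕ :=
  ((subfmls φ).filter fun ψ => box ψ ∈ subfmls φ).card

/-- The translation ⋆ : p⋆ = p, ⊥⋆ = ⊥, (φ→ψ)⋆ = φ⋆→ψ⋆, (□φ)⋆ = φ⋆ ∧ □φ⋆. -/
def star : Formula → Formula
  | var p => var p
  | bot => bot
  | imp φ ψ => (star φ).imp (star ψ)
  | box φ => (star φ).and (star φ).box

end Formula

/-- Propositional tautology: true under every valuation treating variables and
boxed formulas as atoms. -/
def Tautology (φ : Formula) : Prop :=
  ∀ v : Formula → Bool, v .bot = false →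
    (∀ ψ θ : Formula, v (ψ.imp θ) = (!v ψ || v θ)) → v φ = true

/-- A normal modal logic: contains all tautologies and □(p→q)→(□p→□q), and is
closed under modus ponens, necessitation and uniform substitution. -/
structure IsNormal (L : Set Formula) : Prop where
  taut : ∀ φ, Tautology φ → φ ∈ L
  axK : ((Formula.var 0).imp (Formula.var 1)).box.imp
      ((Formula.var 0).box.imp (Formula.var 1).box) ∈ L
  mp : ∀ φ ψ : Formula, φ.imp ψ ∈ L → φ ∈ L → ψ ∈ L
  nec : ∀ φ : Formula, φ ∈ L → φ.box ∈ L
  subst_mem : ∀ φ ∈ L, ∀ σ : ℕ → Formula, Formula.subst σ φ ∈ L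

/-- The least normal modal logic including `X`. -/
def NormalExt (X : Set Formula) : Set Formula :=
  ⋂₀ {L : Set Formula | IsNormal L ∧ X ⊆ L}

/-- The least normal modal logic K. -/
def TheoryK : Set Formula := NormalExt ∅

def axT : Formula := (Formula.var 0).box.imp (Formula.var 0)
def ax4 : Formula := (Formula.var 0).box.imp (Formula.var 0).box.box
def axB : Formula := (Formula.var 0).imp (Formula.var 0).dia.box
def axD : Formula := Formula.bot.box.neg
def axGL : Formula := ((Formula.var 0).box.imp (Formula.var 0)).box.imp (Formula.var 0).box
def axGrz : Formula :=
  (((Formula.var 0).imp (Formula.var 0).box).box.imp (Formula.var 0)).box.imp (Formula.var 0)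

def TheoryKD : Set Formula := NormalExt {axD}
def TheoryKT : Set Formula := NormalExt {axT}
def TheoryKB : Set Formula := NormalExt {axB}
def TheoryKDB : Set Formula := NormalExt {axD, axB}
def TheoryKTB : Set Formula := NormalExt {axT, axB}
def TheoryK4 : Set Formula := NormalExt {ax4}
def TheoryS4 : Set Formula := NormalExt {axT, ax4}
def TheoryGL : Set Formula := NormalExt {axGL}
def TheoryGrz : Set Formula := NormalExt {axGrz}

/-- L⋆ := {φ : L ⊢ φ⋆}. -/
def starLogic (L : Set Formula) : Set Formula := {φ | Formula.star φ ∈ L}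

/-- θ is a uniform Lyndon interpolant of (φ, P, Q) in L. -/
def IsULInterpolant (L : Set Formula) (φ : Formula) (P Q : Finset ℕ) (θ : Formula) : Prop :=
  θ.vpos ⊆ φ.vpos \ P ∧ θ.vneg ⊆ φ.vneg \ Q ∧ φ.imp θ ∈ L ∧
    ∀ ψ : Formula, ψ.vpos ∩ P = ∅ → ψ.vneg ∩ Q = ∅ → φ.imp ψ ∈ L → θ.imp ψ ∈ L

/-- The uniform Lyndon interpolation property. -/
def ULIP (L : Set Formula) : Prop :=
  ∀ (φ : Formula) (P Q : Finset ℕ), ∃ θ : Formula, IsULInterpolant L φ P Q θ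

/-- The uniform interpolation property. -/
def UIP (L : Set Formula) : Prop :=
  ∀ (φ : Formula) (P : Finset ℕ), ∃ θ : Formula,
    θ.vars ⊆ φ.vars \ P ∧ φ.imp θ ∈ L ∧
      ∀ ψ : Formula, ψ.vars ∩ P = ∅ → φ.imp ψ ∈ L → θ.imp ψ ∈ L

/-- The Lyndon interpolation property. -/
def LIP (L : Set Formula) : Prop :=
  ∀ φ ψ : Formula, φ.imp ψ ∈ L → ∃ θ : Formula,
    θ.vpos ⊆ φ.vpos ∩ ψ.vpos ∧ θ.vneg ⊆ φ.vneg ∩ ψ.vneg ∧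
      φ.imp θ ∈ L ∧ θ.imp ψ ∈ L

/-- A Kripke model. -/
structure KripkeModel where
  W : Type
  nonempty : Nonempty W
  rel : W → W → Prop
  val : W → ℕ → Prop

/-- Satisfaction in a Kripke model. -/
def KripkeModel.Sat (M : KripkeModel) : Formula → M.W → Prop
  | .var p, w => M.val w p
  | .bot, _ => False
  | .imp φ ψ, w => M.Sat φ w → M.Sat ψ w
  | .box φ, w => ∀ x, M.rel w x → M.Sat φ x

/-- A (P,Q)-formula: v⁺(φ) ⊆ P and v⁻(φ) ⊆ Q. -/
def PQFormula (P Q : Finset ℕ) (φ : Formula) : Prop := φ.vpos ⊆ P ∧ φ.vneg ⊆ Q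

/-- `F n P Q` is a finite list of (P,Q)-formulas of modal depth ≤ n such that every
(P,Q)-formula of modal depth ≤ n is K-provably equivalent to some member. -/
def IsFamily (F : ℕ → Finset ℕ → Finset ℕ → List Formula) : Prop :=
  ∀ (n : ℕ) (P Q : Finset ℕ),
    (∀ φ ∈ F n P Q, PQFormula P Q φ ∧ φ.depth ≤ n) ∧
    ∀ ψ : Formula, PQFormula P Q ψ → ψ.depth ≤ n →
      ∃ φ ∈ F n P Q, Formula.iff φ ψ ∈ TheoryK

/-- Th_n^{(P,Q)}(w) = {φ ∈ F_n^{(P,Q)} : w ⊩ φ}. -/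
def Th (F : ℕ → Finset ℕ → Finset ℕ → List Formula) (M : KripkeModel)
    (n : ℕ) (P Q : Finset ℕ) (w : M.W) : Set Formula :=
  {φ | φ ∈ F n P Q ∧ M.Sat φ w}

def conjList : List Formula → Formula
  | [] => Formula.top
  | φ :: l => φ.and (conjList l)

open Classical in
/-- C_n^{(P,Q)}(w) = ⋀ Th_n^{(P,Q)}(w). -/
noncomputable def Cfml (F : ℕ → Finset ℕ → Finset ℕ → List Formula) (M : KripkeModel)
    (n : ℕ) (P Q : Finset ℕ) (w : M.W) : Formula :=
  conjList ((F n P Q).filter fun φ => decide (M.Sat φ w))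

/-- Layered (P,Q)-bisimulation between M and M'. -/
def LayeredBisim (P Q : Finset ℕ) (M M' : KripkeModel)
    (Z : M.W → ℕ → M'.W → Prop) : Prop :=
  (∀ w n w', Z w n w' →
    (∀ p ∈ P, M.val w p → M'.val w' p) ∧ (∀ q ∈ Q, ¬M.val w q → ¬M'.val w' q)) ∧
  (∀ w n w', Z w (n + 1) w' → ∀ x, M.rel w x → ∃ x', M'.rel w' x' ∧ Z x n x') ∧
  (∀ w n w', Z w (n + 1) w' → ∀ x', M'.rel w' x' → ∃ x, M.rel w x ∧ Z x n x')

/-- Downward closedness of a layered bisimulation. -/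
def DownClosed (M M' : KripkeModel) (Z : M.W → ℕ → M'.W → Prop) : Prop :=
  ∀ w n w', Z w n w' → ∀ m ≤ n, Z w m w'

/-- A class of Kripke models has ULIP. -/
def ClassULIP (F : ℕ → Finset ℕ → Finset ℕ → List Formula) (Cl : Set KripkeModel) : Prop :=
  ∀ P1 P2 P3 Q1 Q2 Q3 : Finset ℕ,
    Disjoint P1 P2 → Disjoint P1 P3 → Disjoint P2 P3 →
    Disjoint Q1 Q2 → Disjoint Q1 Q3 → Disjoint Q2 Q3 →
    ∀ M : KripkeModel, M ∈ Cl → ∀ M' : KripkeModel, M' ∈ Cl →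
    ∀ w : M.W, ∀ w' : M'.W, ∀ m n : ℕ,
      Th F M n P2 Q2 w ⊆ Th F M' n P2 Q2 w' →
      ∃ Mst : KripkeModel, Mst ∈ Cl ∧ ∃ wst : Mst.W,
        Th F M n (P1 ∪ P2) (Q1 ∪ Q2) w ⊆ Th F Mst n (P1 ∪ P2) (Q1 ∪ Q2) wst ∧
        Th F Mst m (P2 ∪ P3) (Q2 ∪ Q3) wst ⊆ Th F M' m (P2 ∪ P3) (Q2 ∪ Q3) w'
namespace ULdev
open Formula

lemma mem_normalExt {X : Set Formula} {φ : Formula} :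
    φ ∈ NormalExt X ↔ ∀ L : Set Formula, IsNormal L → X ⊆ L → φ ∈ L := by
  simp [NormalExt, Set.mem_sInter, and_imp]

lemma normalExt_isNormal (X : Set Formula) : IsNormal (NormalExt X) := by
  constructor
  · intro φ h; exact mem_normalExt.2 fun L hL _ => hL.taut φ h
  · exact mem_normalExt.2 fun L hL _ => hL.axK
  · intro φ ψ h1 h2; exact mem_normalExt.2 fun L hL hX =>
      hL.mp φ ψ (mem_normalExt.1 h1 L hL hX) (mem_normalExt.1 h2 L hL hX)
  · intro φ h; exact mem_normalExt.2 fun L hL hX => hL.nec φ (mem_normalExt.1 h L hL hX)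
  · intro φ h σ; exact mem_normalExt.2 fun L hL hX => hL.subst_mem φ (mem_normalExt.1 h L hL hX) σ

lemma subset_normalExt (X : Set Formula) : X ⊆ NormalExt X := by
  intro φ h; exact mem_normalExt.2 fun L _ hX => hX h

lemma normalExt_subset {X L : Set Formula} (hL : IsNormal L) (hX : X ⊆ L) :
    NormalExt X ⊆ L := fun _ h => mem_normalExt.1 h L hL hX

section NormalToolkit

variable {L : Set Formula} (hL : IsNormal L)

/-- tautology helpers -/
lemma taut_k (a b : Formula) : Tautology (a.imp (b.imp a)) := by
  intro v h0 h1; simp only [h1]; cases v a <;> cases v b <;> simp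

lemma taut_self (a : Formula) : Tautology (a.imp a) := by
  intro v h0 h1; simp only [h1]; cases v a <;> simp

lemma taut_trans (a b c : Formula) :
    Tautology ((a.imp b).imp ((b.imp c).imp (a.imp c))) := by
  intro v h0 h1; simp only [h1]; cases v a <;> cases v b <;> cases v c <;> simp

lemma taut_s (a b c : Formula) :
    Tautology ((a.imp (b.imp c)).imp ((a.imp b).imp (a.imp c))) := by
  intro v h0 h1; simp only [h1]; cases v a <;> cases v b <;> cases v c <;> simp

lemma taut_and_left (a b : Formula) : Tautology ((a.and b).imp a) := by
  intro v h0 h1; simp only [Formula.and, Formula.neg, h1, h0]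
  cases v a <;> cases v b <;> simp

lemma taut_and_right (a b : Formula) : Tautology ((a.and b).imp b) := by
  intro v h0 h1; simp only [Formula.and, Formula.neg, h1, h0]
  cases v a <;> cases v b <;> simp

lemma taut_imp_and (a b c : Formula) :
    Tautology ((c.imp a).imp ((c.imp b).imp (c.imp (a.and b)))) := by
  intro v h0 h1; simp only [Formula.and, Formula.neg, h1, h0]
  cases v a <;> cases v b <;> cases v c <;> simp

lemma taut_top : Tautology Formula.top := by
  intro v h0 h1; simp only [Formula.top, Formula.neg, h1, h0]; simp

lemma taut_curry (a b c : Formula) :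
    Tautology (((a.and b).imp c).imp (a.imp (b.imp c))) := by
  intro v h0 h1; simp only [Formula.and, Formula.neg, h1, h0]
  cases v a <;> cases v b <;> cases v c <;> simp

lemma taut_uncurry (a b c : Formula) :
    Tautology ((a.imp (b.imp c)).imp ((a.and b).imp c)) := by
  intro v h0 h1; simp only [Formula.and, Formula.neg, h1, h0]
  cases v a <;> cases v b <;> cases v c <;> simp

lemma taut_dni (a : Formula) : Tautology (a.imp a.neg.neg) := by
  intro v h0 h1; simp only [Formula.neg, h1, h0]; cases v a <;> simp

lemma taut_negE (a b : Formula) : Tautology (a.neg.imp (a.imp b)) := by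
  intro v h0 h1; simp only [Formula.neg, h1, h0]; cases v a <;> cases v b <;> simp

lemma taut_clavius (a b : Formula) : Tautology ((b.imp (a.neg.imp bot)).imp (b.imp a)) := by
  intro v h0 h1; simp only [Formula.neg, h1, h0]; cases v a <;> cases v b <;> simp

include hL

lemma imp_self (a : Formula) : a.imp a ∈ L := hL.taut _ (taut_self a)

lemma imp_intro {a : Formula} (b : Formula) (h : a ∈ L) : b.imp a ∈ L :=
  hL.mp _ _ (hL.taut _ (taut_k a b)) h

lemma imp_trans {a b c : Formula} (h1 : a.imp b ∈ L) (h2 : b.imp c ∈ L) : a.imp c ∈ L :=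
  hL.mp _ _ (hL.mp _ _ (hL.taut _ (taut_trans a b c)) h1) h2

lemma and_left (a b : Formula) : (a.and b).imp a ∈ L := hL.taut _ (taut_and_left a b)

lemma and_right (a b : Formula) : (a.and b).imp b ∈ L := hL.taut _ (taut_and_right a b)

lemma imp_and {a b c : Formula} (h1 : c.imp a ∈ L) (h2 : c.imp b ∈ L) :
    c.imp (a.and b) ∈ L :=
  hL.mp _ _ (hL.mp _ _ (hL.taut _ (taut_imp_and a b c)) h1) h2

lemma top_mem : Formula.top ∈ L := hL.taut _ taut_top

lemma imp_curry {a b c : Formula} (h : (a.and b).imp c ∈ L) : a.imp (b.imp c) ∈ L :=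
  hL.mp _ _ (hL.taut _ (taut_curry a b c)) h

lemma imp_uncurry {a b c : Formula} (h : a.imp (b.imp c) ∈ L) : (a.and b).imp c ∈ L :=
  hL.mp _ _ (hL.taut _ (taut_uncurry a b c)) h

lemma imp_mp {a b c : Formula} (h1 : a.imp (b.imp c) ∈ L) (h2 : a.imp b ∈ L) :
    a.imp c ∈ L :=
  hL.mp _ _ (hL.mp _ _ (hL.taut _ (taut_s a b c)) h1) h2

lemma box_mono {a b : Formula} (h : a.imp b ∈ L) : a.box.imp b.box ∈ L := by
  have hK := hL.subst_mem _ hL.axK (fun n => match n with | 0 => a | _ => b)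
  exact hL.mp _ _ hK (hL.nec _ h)

lemma axK_inst (a b : Formula) : (a.imp b).box.imp (a.box.imp b.box) ∈ L :=
  hL.subst_mem _ hL.axK (fun n => match n with | 0 => a | _ => b)

lemma box_and (a b : Formula) : (a.box.and b.box).imp ((a.and b).box) ∈ L := by
  have h1 : a.imp (b.imp (a.and b)) ∈ L := by
    apply imp_curry hL
    exact imp_and hL (and_left hL a b) (and_right hL a b)
  have h2 : a.box.imp (b.imp (a.and b)).box ∈ L := box_mono hL h1
  have h3 : a.box.imp (b.box.imp (a.and b).box) ∈ L :=
    imp_trans hL h2 (axK_inst hL b (a.and b))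
  exact imp_uncurry hL h3

lemma conj_imp_mem {l : List Formula} {χ : Formula} (h : χ ∈ l) :
    (conjList l).imp χ ∈ L := by
  induction l with
  | nil => simp at h
  | cons a l ih =>
    rcases List.mem_cons.1 h with h | h
    · subst h; exact and_left hL _ _
    · exact imp_trans hL (and_right hL a (conjList l)) (ih h)

lemma imp_conj {A : Formula} {l : List Formula} (h : ∀ χ ∈ l, A.imp χ ∈ L) :
    A.imp (conjList l) ∈ L := by
  induction l with
  | nil => exact imp_intro hL _ (top_mem hL)
  | cons a l ih =>
    exact imp_and hL (h a (by simp)) (ih fun χ hχ => h χ (by simp [hχ]))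

lemma conj_box {l : List Formula} :
    (conjList (l.map Formula.box)).imp (conjList l).box ∈ L := by
  induction l with
  | nil => exact imp_intro hL _ (hL.nec _ (top_mem hL))
  | cons a l ih =>
    have h1 : (conjList ((a :: l).map Formula.box)).imp (a.box.and (conjList l).box) ∈ L := by
      simp only [List.map_cons, conjList]
      exact imp_and hL (and_left hL _ _) (imp_trans hL (and_right hL _ _) ih)
    exact imp_trans hL h1 (box_and hL a (conjList l))

end NormalToolkit

end ULdev
set_option linter.unusedSectionVars false
namespace ULdev
open Formula

def Prov (L : Set Formula) (Γ : Set Formula) (φ : Formula) : Prop :=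
  ∃ l : List Formula, (∀ χ ∈ l, χ ∈ Γ) ∧ (conjList l).imp φ ∈ L

section ProvLemmas

variable {L : Set Formula} (hL : IsNormal L) {Γ Δ : Set Formula} {φ ψ χ : Formula}

include hL

lemma prov_of_mem (h : φ ∈ Γ) : Prov L Γ φ :=
  ⟨[φ], by simpa using h, and_left hL _ _⟩

lemma prov_of_thm (h : φ ∈ L) : Prov L Γ φ :=
  ⟨[], by simp, imp_intro hL _ h⟩

lemma prov_mono (hsub : Γ ⊆ Δ) (h : Prov L Γ φ) : Prov L Δ φ := by
  obtain ⟨l, h1, h2⟩ := h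
  exact ⟨l, fun χ hχ => hsub (h1 χ hχ), h2⟩

lemma prov_mp (h1 : Prov L Γ (φ.imp ψ)) (h2 : Prov L Γ φ) : Prov L Γ ψ := by
  obtain ⟨l1, hm1, hp1⟩ := h1
  obtain ⟨l2, hm2, hp2⟩ := h2
  refine ⟨l1 ++ l2, ?_, ?_⟩
  · intro χ hχ; rcases List.mem_append.1 hχ with h | h
    · exact hm1 χ h
    · exact hm2 χ h
  · have e1 : (conjList (l1 ++ l2)).imp (conjList l1) ∈ L :=
      imp_conj hL fun χ hχ => conj_imp_mem hL (List.mem_append_left _ hχ)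
    have e2 : (conjList (l1 ++ l2)).imp (conjList l2) ∈ L :=
      imp_conj hL fun χ hχ => conj_imp_mem hL (List.mem_append_right _ hχ)
    exact imp_mp hL (imp_trans hL e1 hp1) (imp_trans hL e2 hp2)

lemma prov_weaken (h : φ ∈ L) (hmem : φ.imp ψ ∈ L) : ψ ∈ L := hL.mp _ _ hmem h

lemma deduction_mpr (h : Prov L Γ (χ.imp φ)) : Prov L (insert χ Γ) φ :=
  prov_mp hL (prov_mono hL (Set.subset_insert _ _) h)
    (prov_of_mem hL (Set.mem_insert _ _))

lemma deduction_mp (h : Prov L (insert χ Γ) φ) : Prov L Γ (χ.imp φ) := by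
  classical
  obtain ⟨l, hm, hp⟩ := h
  refine ⟨l.filter (fun e => e ≠ χ), ?_, ?_⟩
  · intro e he
    have := List.mem_filter.1 he
    rcases hm e this.1 with h | h
    · exfalso; revert this; simp [h]
    · exact h
  · set l' := l.filter (fun e => e ≠ χ) with hl'
    have key : ((conjList l').and χ).imp (conjList l) ∈ L := by
      apply imp_conj hL
      intro e he
      by_cases hc : e = χ
      · subst hc; exact and_right hL _ _
      · refine imp_trans hL (and_left hL _ _) (conj_imp_mem hL ?_)
        rw [hl']; rw [List.mem_filter]; exact ⟨he, by simp [hc]⟩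
    exact imp_curry hL (imp_trans hL key hp)

end ProvLemmas

def Con (L : Set Formula) (Γ : Set Formula) : Prop := ¬ Prov L Γ Formula.bot

def MCS (L : Set Formula) (Γ : Set Formula) : Prop :=
  Con L Γ ∧ ∀ φ, φ ∉ Γ → ¬ Con L (insert φ Γ)

section MCSLemmas

variable {L : Set Formula} (hL : IsNormal L) {Γ : Set Formula} {φ ψ : Formula}

lemma chain_finite_sub {c : Set (Set Formula)} (hc : IsChain (· ⊆ ·) c)
    (hne : c.Nonempty) (l : List Formula) (h : ∀ χ ∈ l, χ ∈ ⋃₀ c) :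
    ∃ s ∈ c, ∀ χ ∈ l, χ ∈ s := by
  induction l with
  | nil => obtain ⟨s, hs⟩ := hne; exact ⟨s, hs, by simp⟩
  | cons a l ih =>
    obtain ⟨s, hs, hsl⟩ := ih (fun χ hχ => h χ (by simp [hχ]))
    obtain ⟨t, ht, hat⟩ := h a (by simp)
    rcases hc.total hs ht with hst | hts
    · exact ⟨t, ht, fun χ hχ => by
        rcases List.mem_cons.1 hχ with h' | h'
        · subst h'; exact hat
        · exact hst (hsl χ h')⟩
    · exact ⟨s, hs, fun χ hχ => by
        rcases List.mem_cons.1 hχ with h' | h'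
        · subst h'; exact hts hat
        · exact hsl χ h'⟩

lemma lindenbaum (h : Con L Γ) : ∃ Δ, Γ ⊆ Δ ∧ MCS L Δ := by
  have := zorn_subset_nonempty {Δ : Set Formula | Con L Δ} ?_ Γ h
  · obtain ⟨Δ, hsub, hmax⟩ := this
    refine ⟨Δ, hsub, hmax.prop, fun φ hφ hcon => hφ ?_⟩
    have := hmax.eq_of_subset hcon (Set.subset_insert _ _)
    rw [this]; exact Set.mem_insert _ _
  · intro c hcS hchain hcne
    refine ⟨⋃₀ c, ?_, fun s hs => Set.subset_sUnion_of_mem hs⟩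
    intro hprov
    obtain ⟨l, hm, hp⟩ := hprov
    obtain ⟨s, hs, hsl⟩ := chain_finite_sub hchain hcne l hm
    exact hcS hs ⟨l, hsl, hp⟩

include hL

lemma mcs_prov_mem (hΓ : MCS L Γ) (h : Prov L Γ φ) : φ ∈ Γ := by
  by_contra hmem
  apply hΓ.2 φ hmem
  intro hbot
  have h2 : Prov L Γ (φ.imp Formula.bot) := deduction_mp hL hbot
  exact hΓ.1 (prov_mp hL h2 h)

lemma mcs_thm_mem (hΓ : MCS L Γ) (h : φ ∈ L) : φ ∈ Γ :=
  mcs_prov_mem hL hΓ (prov_of_thm hL h)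

lemma mcs_mp (hΓ : MCS L Γ) (h1 : φ.imp ψ ∈ Γ) (h2 : φ ∈ Γ) : ψ ∈ Γ :=
  mcs_prov_mem hL hΓ (prov_mp hL (prov_of_mem hL h1) (prov_of_mem hL h2))

lemma mcs_bot_not_mem (hΓ : MCS L Γ) : Formula.bot ∉ Γ :=
  fun h => hΓ.1 (prov_of_mem hL h)

lemma mcs_neg_mem (hΓ : MCS L Γ) (h : φ ∉ Γ) : φ.neg ∈ Γ := by
  apply mcs_prov_mem hL hΓ
  have : ¬ Con L (insert φ Γ) := hΓ.2 φ h
  rw [Con, not_not] at this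
  exact deduction_mp hL this

lemma mcs_imp_mem (hΓ : MCS L Γ) : φ.imp ψ ∈ Γ ↔ (φ ∈ Γ → ψ ∈ Γ) := by
  constructor
  · intro h hφ; exact mcs_mp hL hΓ h hφ
  · intro h
    by_cases hφ : φ ∈ Γ
    · exact mcs_mp hL hΓ (mcs_thm_mem hL hΓ (hL.taut _ (taut_k ψ φ))) (h hφ)
    · exact mcs_mp hL hΓ (mcs_thm_mem hL hΓ (hL.taut _ (taut_negE φ ψ)))
        (mcs_neg_mem hL hΓ hφ)

lemma mcs_not_mem_of_neg (hΓ : MCS L Γ) (h : φ.neg ∈ Γ) : φ ∉ Γ := by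
  intro hφ
  exact mcs_bot_not_mem hL hΓ (mcs_mp hL hΓ h hφ)

lemma mcs_box_conj (hΓ : MCS L Γ) {l : List Formula} (h : ∀ χ ∈ l, χ.box ∈ Γ) :
    (conjList l).box ∈ Γ := by
  have h1 : conjList (l.map Formula.box) ∈ Γ := by
    apply mcs_prov_mem hL hΓ
    refine ⟨l.map Formula.box, by simpa using h, imp_self hL _⟩
  exact mcs_mp hL hΓ (mcs_thm_mem hL hΓ (conj_box hL)) h1

end MCSLemmas

end ULdev
namespace ULdev
open Formula

/-! ### Semantics: satisfaction lemmas -/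

lemma sat_imp {M : KripkeModel} {a b : Formula} {w : M.W} :
    M.Sat (a.imp b) w ↔ (M.Sat a w → M.Sat b w) := Iff.rfl

lemma sat_bot {M : KripkeModel} {w : M.W} : ¬ M.Sat Formula.bot w := fun h => h

lemma sat_neg {M : KripkeModel} {a : Formula} {w : M.W} :
    M.Sat a.neg w ↔ ¬ M.Sat a w := Iff.rfl

lemma sat_box {M : KripkeModel} {a : Formula} {w : M.W} :
    M.Sat a.box w ↔ ∀ x, M.rel w x → M.Sat a x := Iff.rfl

lemma sat_and {M : KripkeModel} {a b : Formula} {w : M.W} :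
    M.Sat (a.and b) w ↔ (M.Sat a w ∧ M.Sat b w) := by
  simp only [Formula.and, sat_neg, sat_imp]
  tauto

lemma sat_dia {M : KripkeModel} {a : Formula} {w : M.W} :
    M.Sat a.dia w ↔ ∃ x, M.rel w x ∧ M.Sat a x := by
  simp only [Formula.dia, sat_neg, sat_box]
  push_neg
  tauto

lemma sat_top {M : KripkeModel} {w : M.W} : M.Sat Formula.top w := fun h => h

lemma sat_conjList {M : KripkeModel} {l : List Formula} {w : M.W} :
    M.Sat (conjList l) w ↔ ∀ χ ∈ l, M.Sat χ w := by
  induction l with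
  | nil => simp [conjList, sat_top]
  | cons a l ih => simp [conjList, sat_and, ih]

/-- Disjunction. -/
def fOr (a b : Formula) : Formula := a.neg.imp b

def disjList : List Formula → Formula
  | [] => Formula.bot
  | a :: l => fOr a (disjList l)

lemma sat_fOr {M : KripkeModel} {a b : Formula} {w : M.W} :
    M.Sat (fOr a b) w ↔ (M.Sat a w ∨ M.Sat b w) := by
  simp only [fOr, sat_imp, sat_neg]
  tauto

lemma sat_disjList {M : KripkeModel} {l : List Formula} {w : M.W} :
    M.Sat (disjList l) w ↔ ∃ χ ∈ l, M.Sat χ w := by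
  induction l with
  | nil => simp [disjList, sat_bot]
  | cons a l ih => simp [disjList, sat_fOr, ih]

/-! ### Validity and soundness -/

def Valid (Cl : Set KripkeModel) (φ : Formula) : Prop := ∀ M ∈ Cl, ∀ w, M.Sat φ w

def SerialCl : Set KripkeModel := {M | ∀ w, ∃ x, M.rel w x}

def SerSymCl : Set KripkeModel :=
  {M | (∀ w, ∃ x, M.rel w x) ∧ ∀ w x, M.rel w x → M.rel x w}

lemma sat_subst (σ : ℕ → Formula) (M : KripkeModel) (φ : Formula) (w : M.W) :
    M.Sat (φ.subst σ) w ↔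
      KripkeModel.Sat ⟨M.W, M.nonempty, M.rel, fun v p => M.Sat (σ p) v⟩ φ w := by
  induction φ generalizing w with
  | var p => simp [Formula.subst, KripkeModel.Sat]
  | bot => simp [Formula.subst, KripkeModel.Sat]
  | imp a b iha ihb => simp [Formula.subst, KripkeModel.Sat, iha, ihb]
  | box a iha => simp [Formula.subst, KripkeModel.Sat, iha]

lemma valid_isNormal (Cl : Set KripkeModel)
    (hcl : ∀ (M : KripkeModel) (val' : M.W → ℕ → Prop), M ∈ Cl →
      (⟨M.W, M.nonempty, M.rel, val'⟩ : KripkeModel) ∈ Cl) :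
    IsNormal {φ | Valid Cl φ} := by
  constructor
  · intro φ h M hM w
    classical
    set v : Formula → Bool := fun ψ => decide (M.Sat ψ w) with hv
    have h0 : v Formula.bot = false := by simp [hv, sat_bot]
    have h1 : ∀ ψ θ : Formula, v (ψ.imp θ) = (!v ψ || v θ) := by
      intro ψ θ
      by_cases hψ : M.Sat ψ w <;> by_cases hθ : M.Sat θ w <;>
        simp [hv, hψ, hθ, sat_imp]
    have := h v h0 h1
    simpa [hv] using this
  · intro M hM w
    intro h h0 x hx
    exact h x hx (h0 x hx)
  · intro φ ψ h1 h2 M hM w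
    exact h1 M hM w (h2 M hM w)
  · intro φ h M hM w x hx
    exact h M hM x
  · intro φ h σ M hM w
    rw [sat_subst]
    exact h ⟨M.W, M.nonempty, M.rel, fun v p => M.Sat (σ p) v⟩ (hcl M _ hM) w

lemma serial_val_closed : ∀ (M : KripkeModel) (val' : M.W → ℕ → Prop), M ∈ SerialCl →
    (⟨M.W, M.nonempty, M.rel, val'⟩ : KripkeModel) ∈ SerialCl := by
  intro M val' hM; exact hM

lemma sersym_val_closed : ∀ (M : KripkeModel) (val' : M.W → ℕ → Prop), M ∈ SerSymCl →
    (⟨M.W, M.nonempty, M.rel, val'⟩ : KripkeModel) ∈ SerSymCl := by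
  intro M val' hM; exact hM

lemma soundness_KD : ∀ φ ∈ TheoryKD, Valid SerialCl φ := by
  have h := normalExt_subset (X := {axD}) (valid_isNormal SerialCl serial_val_closed) ?_
  · exact fun φ hφ => h hφ
  · intro φ hφ M hM w
    simp only [Set.mem_singleton_iff] at hφ
    subst hφ
    intro hbox
    obtain ⟨x, hx⟩ := hM w
    exact hbox x hx

lemma soundness_KDB : ∀ φ ∈ TheoryKDB, Valid SerSymCl φ := by
  have h := normalExt_subset (X := {axD, axB}) (valid_isNormal SerSymCl sersym_val_closed) ?_
  · exact fun φ hφ => h hφ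
  · intro φ hφ M hM w
    rcases hφ with hφ | hφ
    · subst hφ
      intro hbox
      obtain ⟨x, hx⟩ := hM.1 w
      exact hbox x hx
    · simp only [Set.mem_singleton_iff] at hφ
      subst hφ
      intro hp
      rw [sat_box]
      intro x hx
      rw [sat_dia]
      exact ⟨w, hM.2 w x hx, hp⟩

/-! ### Canonical model and completeness -/

section Canonical

variable {L : Set Formula} (hL : IsNormal L)

include hL

lemma existence (hax : axD ∈ L) {Γ : Set Formula} (hΓ : MCS L Γ) :
    ∀ φ, φ.box ∉ Γ → ∃ Δ, MCS L Δ ∧ (∀ ψ, ψ.box ∈ Γ → ψ ∈ Δ) ∧ φ ∉ Δ := by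
  intro φ hφ
  have hcon : Con L (insert φ.neg {ψ | ψ.box ∈ Γ}) := by
    intro hprov
    have h2 : Prov L {ψ | ψ.box ∈ Γ} (φ.neg.imp Formula.bot) := deduction_mp hL hprov
    obtain ⟨l, hm, hp⟩ := h2
    have hφl : (conjList l).imp φ ∈ L :=
      hL.mp _ _ (hL.taut _ (taut_clavius φ (conjList l))) hp
    have hboxl : (conjList l).box.imp φ.box ∈ L := box_mono hL hφl
    have : (conjList l).box ∈ Γ := mcs_box_conj hL hΓ fun χ hχ => hm χ hχ
    exact hφ (mcs_mp hL hΓ (mcs_thm_mem hL hΓ hboxl) this)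
  obtain ⟨Δ, hsub, hΔ⟩ := lindenbaum hcon
  refine ⟨Δ, hΔ, fun ψ hψ => hsub (Set.mem_insert_of_mem _ hψ), ?_⟩
  have : φ.neg ∈ Δ := hsub (Set.mem_insert _ _)
  exact mcs_not_mem_of_neg hL hΔ this

lemma mcs_serial_succ (hax : axD ∈ L) {Γ : Set Formula} (hΓ : MCS L Γ) :
    ∃ Δ, MCS L Δ ∧ ∀ ψ, ψ.box ∈ Γ → ψ ∈ Δ := by
  have hbb : Formula.bot.box ∉ Γ := by
    intro h
    have : Formula.bot.box.neg ∈ Γ := mcs_thm_mem hL hΓ hax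
    exact mcs_bot_not_mem hL hΓ (mcs_mp hL hΓ this h)
  obtain ⟨Δ, h1, h2, _⟩ := existence hL hax hΓ Formula.bot hbb
  exact ⟨Δ, h1, h2⟩

/-- The canonical model for a logic `L` containing D, rooted by nonemptiness. -/
noncomputable def canModel (hax : axD ∈ L) (hW : Nonempty {Γ : Set Formula // MCS L Γ}) :
    KripkeModel :=
  ⟨{Γ : Set Formula // MCS L Γ}, hW,
    fun Γ Δ => ∀ φ, φ.box ∈ Γ.1 → φ ∈ Δ.1,
    fun Γ p => Formula.var p ∈ Γ.1⟩

lemma canModel_truth (hax : axD ∈ L) (hW : Nonempty {Γ : Set Formula // MCS L Γ}) :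
    ∀ (φ : Formula) (Γ : {Γ : Set Formula // MCS L Γ}),
      (canModel hax hW).Sat φ Γ ↔ φ ∈ Γ.1 := by
  intro φ
  induction φ with
  | var p => intro Γ; exact Iff.rfl
  | bot =>
    intro Γ
    exact ⟨fun h => h.elim, fun h => (mcs_bot_not_mem hL Γ.2 h).elim⟩
  | imp a b iha ihb =>
    intro Γ
    exact (imp_congr (iha Γ) (ihb Γ)).trans (mcs_imp_mem hL Γ.2).symm
  | box a iha =>
    intro Γ
    constructor
    · intro h
      by_contra hbox
      obtain ⟨Δ, hΔ, hrel, hnotin⟩ := existence hL hax Γ.2 a hbox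
      exact hnotin ((iha ⟨Δ, hΔ⟩).1 (h ⟨Δ, hΔ⟩ hrel))
    · intro h Δ hrel
      exact (iha Δ).2 (hrel a h)

end Canonical

/-- From a proof with empty context, a theorem. -/
lemma thm_of_prov_empty {L : Set Formula} (hL : IsNormal L) {φ : Formula}
    (h : Prov L ∅ φ) : φ ∈ L := by
  obtain ⟨l, hm, hp⟩ := h
  have hl : l = [] := by
    cases l with
    | nil => rfl
    | cons a l => exact absurd (hm a (by simp)) (Set.notMem_empty a)
  subst hl
  exact hL.mp _ _ hp (top_mem hL)

lemma con_neg_of_not_thm {L : Set Formula} (hL : IsNormal L) {φ : Formula}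
    (hφ : φ ∉ L) : Con L {φ.neg} := by
  intro hprov
  have h2 : Prov L ∅ (φ.neg.imp Formula.bot) := by
    apply deduction_mp hL
    simpa using hprov
  have h3 : φ.neg.imp Formula.bot ∈ L := thm_of_prov_empty hL h2
  have h4 : Formula.top.imp (φ.neg.imp Formula.bot) ∈ L := imp_intro hL _ h3
  have h5 : Formula.top.imp φ ∈ L :=
    hL.mp _ _ (hL.taut _ (taut_clavius φ Formula.top)) h4
  exact hφ (hL.mp _ _ h5 (top_mem hL))

lemma canModel_serial {L : Set Formula} (hL : IsNormal L) (hax : axD ∈ L)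
    (hW : Nonempty {Γ : Set Formula // MCS L Γ}) :
    canModel hax hW ∈ SerialCl := by
  intro Γ
  obtain ⟨Δ, hΔ, hrel⟩ := mcs_serial_succ hL hax Γ.2
  exact ⟨⟨Δ, hΔ⟩, hrel⟩

lemma canModel_symm {L : Set Formula} (hL : IsNormal L) (hax : axD ∈ L) (haxB : axB ∈ L)
    (hW : Nonempty {Γ : Set Formula // MCS L Γ}) :
    ∀ Γ Δ : {Γ : Set Formula // MCS L Γ},
      (canModel hax hW).rel Γ Δ → (canModel hax hW).rel Δ Γ := by
  intro Γ Δ hrel φ hbox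
  by_contra hφ
  have hnegφ : φ.neg ∈ Γ.1 := mcs_neg_mem hL Γ.2 hφ
  have hBinst : φ.neg.imp φ.neg.dia.box ∈ L :=
    hL.subst_mem _ haxB (fun _ => φ.neg)
  have h1 : φ.neg.dia.box ∈ Γ.1 := mcs_mp hL Γ.2 (mcs_thm_mem hL Γ.2 hBinst) hnegφ
  have h2 : φ.neg.dia ∈ Δ.1 := hrel _ h1
  have h3 : φ.neg.neg.box ∈ Δ.1 :=
    mcs_mp hL Δ.2 (mcs_thm_mem hL Δ.2 (box_mono hL (hL.taut _ (taut_dni φ)))) hbox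
  exact mcs_bot_not_mem hL Δ.2 (mcs_mp hL Δ.2 h2 h3)

lemma completeness_KD {φ : Formula} (h : Valid SerialCl φ) : φ ∈ TheoryKD := by
  by_contra hφ
  have hL : IsNormal TheoryKD := normalExt_isNormal _
  have hax : axD ∈ TheoryKD := subset_normalExt _ rfl
  obtain ⟨Δ, hsub, hΔ⟩ := lindenbaum (con_neg_of_not_thm hL hφ)
  have hW : Nonempty {Γ : Set Formula // MCS TheoryKD Γ} := ⟨⟨Δ, hΔ⟩⟩
  have hsat := h (canModel hax hW) (canModel_serial hL hax hW) ⟨Δ, hΔ⟩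
  rw [canModel_truth hL hax hW] at hsat
  exact mcs_not_mem_of_neg hL hΔ (hsub rfl) hsat

lemma completeness_KDB {φ : Formula} (h : Valid SerSymCl φ) : φ ∈ TheoryKDB := by
  by_contra hφ
  have hL : IsNormal TheoryKDB := normalExt_isNormal _
  have hax : axD ∈ TheoryKDB := subset_normalExt _ (Set.mem_insert _ _)
  have haxB : axB ∈ TheoryKDB := subset_normalExt _ (Set.mem_insert_of_mem _ rfl)
  obtain ⟨Δ, hsub, hΔ⟩ := lindenbaum (con_neg_of_not_thm hL hφ)
  have hW : Nonempty {Γ : Set Formula // MCS TheoryKDB Γ} := ⟨⟨Δ, hΔ⟩⟩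
  have hsat := h (canModel hax hW)
    ⟨canModel_serial hL hax hW, canModel_symm hL hax haxB hW⟩ ⟨Δ, hΔ⟩
  rw [canModel_truth hL hax hW] at hsat
  exact mcs_not_mem_of_neg hL hΔ (hsub rfl) hsat

end ULdev
namespace ULdev
open Formula

/-! ### Types (layered characteristic objects) -/

def Ty : ℕ → Type
  | 0 => Finset ℕ × Finset ℕ
  | n + 1 => (Finset ℕ × Finset ℕ) × Finset (Ty n)

instance tyDecEq : ∀ n, DecidableEq (Ty n)
  | 0 => inferInstanceAs (DecidableEq (Finset ℕ × Finset ℕ))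
  | n + 1 =>
    letI := tyDecEq n
    inferInstanceAs (DecidableEq ((Finset ℕ × Finset ℕ) × Finset (Ty n)))

variable (P Q : Finset ℕ)

def allTy : ∀ n, Finset (Ty n)
  | 0 => P.powerset ×ˢ Q.powerset
  | n + 1 => (P.powerset ×ˢ Q.powerset) ×ˢ (allTy n).powerset

open Classical in
/-- The `n`-type of a world. -/
noncomputable def ty (M : KripkeModel) : ∀ n, M.W → Ty n
  | 0, w => (P.filter (fun p => M.val w p), Q.filter (fun q => ¬ M.val w q))
  | n + 1, w =>
    ((P.filter (fun p => M.val w p), Q.filter (fun q => ¬ M.val w q)),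
      (allTy P Q n).filter (fun t => ∃ x, M.rel w x ∧ ty M n x = t))

lemma ty_mem_allTy (M : KripkeModel) : ∀ n (w : M.W), ty P Q M n w ∈ allTy P Q n := by
  classical
  intro n
  induction n with
  | zero =>
    intro w
    rw [ty, allTy]; refine Finset.mem_product.2 ?_
    exact ⟨Finset.mem_powerset.2 (Finset.filter_subset _ _),
      Finset.mem_powerset.2 (Finset.filter_subset _ _)⟩
  | succ n ih =>
    intro w
    rw [ty, allTy]; refine Finset.mem_product.2 ?_
    refine ⟨Finset.mem_product.2 ⟨Finset.mem_powerset.2 (Finset.filter_subset _ _),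
      Finset.mem_powerset.2 (Finset.filter_subset _ _)⟩, ?_⟩
    exact Finset.mem_powerset.2 (Finset.filter_subset _ _)

open Classical in
lemma ty_succ_snd (M : KripkeModel) (n : ℕ) (w : M.W) {t : Ty n} :
    t ∈ (ty P Q M (n+1) w).2 ↔ ∃ x, M.rel w x ∧ ty P Q M n x = t := by
  classical
  rw [ty]
  constructor
  · intro h
    exact (Finset.mem_filter.1 h).2
  · intro h
    apply Finset.mem_filter.2
    obtain ⟨x, hx, hxt⟩ := h
    exact ⟨hxt ▸ ty_mem_allTy P Q M n x, ⟨x, hx, hxt⟩⟩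

/-- The characteristic formula of a type. -/
noncomputable def fml : ∀ n, Ty n → Formula
  | 0, t =>
    (conjList (((t.1 ∩ P).toList.map Formula.var) ++
      ((t.2 ∩ Q).toList.map (fun q => (Formula.var q).neg))))
  | n + 1, t =>
    (fml 0 t.1).and
      ((conjList (t.2.toList.map (fun s => (fml n s).dia))).and
        ((disjList (t.2.toList.map (fml n))).box))

/-! vsgn facts -/

lemma vsgn_neg (a : Formula) (b : Bool) : (a.neg).vsgn b = a.vsgn (!b) := by
  cases b <;> simp [Formula.neg, vsgn]

lemma vsgn_and (a c : Formula) (b : Bool) : (a.and c).vsgn b = a.vsgn b ∪ c.vsgn b := by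
  cases b <;> simp [Formula.and, vsgn, Formula.neg]

lemma vsgn_dia (a : Formula) (b : Bool) : (a.dia).vsgn b = a.vsgn b := by
  cases b <;> simp [Formula.dia, vsgn, Formula.neg]

lemma vsgn_fOr (a c : Formula) (b : Bool) : (fOr a c).vsgn b = a.vsgn b ∪ c.vsgn b := by
  cases b <;> simp [fOr, vsgn, Formula.neg]

lemma vsgn_conjList {l : List Formula} {b : Bool} {S : Finset ℕ}
    (h : ∀ χ ∈ l, χ.vsgn b ⊆ S) : (conjList l).vsgn b ⊆ S := by
  induction l with
  | nil => cases b <;> simp [conjList, Formula.top, Formula.neg, vsgn]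
  | cons a l ih =>
    rw [conjList, vsgn_and]
    exact Finset.union_subset (h a (by simp)) (ih fun χ hχ => h χ (by simp [hχ]))

lemma vsgn_disjList {l : List Formula} {b : Bool} {S : Finset ℕ}
    (h : ∀ χ ∈ l, χ.vsgn b ⊆ S) : (disjList l).vsgn b ⊆ S := by
  induction l with
  | nil => cases b <;> simp [disjList, vsgn]
  | cons a l ih =>
    rw [disjList, vsgn_fOr]
    exact Finset.union_subset (h a (by simp)) (ih fun χ hχ => h χ (by simp [hχ]))

lemma fml_zero_vpos (t : Ty 0) : (fml P Q 0 t).vpos ⊆ P := by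
  rw [fml, vpos]
  apply vsgn_conjList
  intro χ hχ
  rcases List.mem_append.1 hχ with h | h
  · obtain ⟨p, hp, rfl⟩ := List.mem_map.1 h
    intro x hx
    simp only [vsgn, Finset.mem_singleton] at hx
    subst hx
    exact (Finset.mem_inter.1 (Finset.mem_toList.1 hp)).2
  · obtain ⟨q, hq, rfl⟩ := List.mem_map.1 h
    rw [vsgn_neg]
    simp [vsgn]

lemma fml_zero_vneg (t : Ty 0) : (fml P Q 0 t).vneg ⊆ Q := by
  rw [fml, vneg]
  apply vsgn_conjList
  intro χ hχ
  rcases List.mem_append.1 hχ with h | h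
  · obtain ⟨p, hp, rfl⟩ := List.mem_map.1 h
    simp [vsgn]
  · obtain ⟨q, hq, rfl⟩ := List.mem_map.1 h
    rw [vsgn_neg]
    intro x hx
    simp only [Bool.not_false, vsgn, Finset.mem_singleton] at hx
    subst hx
    exact (Finset.mem_inter.1 (Finset.mem_toList.1 hq)).2

lemma fml_vpos : ∀ n (t : Ty n), (fml P Q n t).vpos ⊆ P := by
  intro n
  induction n with
  | zero => exact fml_zero_vpos P Q
  | succ n ih =>
    intro t
    rw [fml, vpos, vsgn_and, vsgn_and]
    refine Finset.union_subset (fml_zero_vpos P Q t.1) (Finset.union_subset ?_ ?_)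
    · apply vsgn_conjList
      intro χ hχ
      obtain ⟨s, hs, rfl⟩ := List.mem_map.1 hχ
      rw [vsgn_dia]
      exact ih s
    · show (disjList _).vsgn true ⊆ P
      apply vsgn_disjList
      intro χ hχ
      obtain ⟨s, hs, rfl⟩ := List.mem_map.1 hχ
      exact ih s

lemma fml_vneg : ∀ n (t : Ty n), (fml P Q n t).vneg ⊆ Q := by
  intro n
  induction n with
  | zero => exact fml_zero_vneg P Q
  | succ n ih =>
    intro t
    rw [fml, vneg, vsgn_and, vsgn_and]
    refine Finset.union_subset (fml_zero_vneg P Q t.1) (Finset.union_subset ?_ ?_)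
    · apply vsgn_conjList
      intro χ hχ
      obtain ⟨s, hs, rfl⟩ := List.mem_map.1 hχ
      rw [vsgn_dia]
      exact ih s
    · show (disjList _).vsgn false ⊆ Q
      apply vsgn_disjList
      intro χ hχ
      obtain ⟨s, hs, rfl⟩ := List.mem_map.1 hχ
      exact ih s

/-! depth facts -/

lemma depth_neg (a : Formula) : a.neg.depth = a.depth := by simp [Formula.neg, depth]

lemma depth_and (a c : Formula) : (a.and c).depth = max a.depth c.depth := by
  simp [Formula.and, depth_neg, depth]

lemma depth_dia (a : Formula) : a.dia.depth = a.depth + 1 := by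
  simp [Formula.dia, depth_neg, depth]

lemma depth_fOr (a c : Formula) : (fOr a c).depth = max a.depth c.depth := by
  simp [fOr, depth_neg, depth]

lemma depth_conjList {l : List Formula} {n : ℕ} (h : ∀ χ ∈ l, χ.depth ≤ n) :
    (conjList l).depth ≤ n := by
  induction l with
  | nil => simp [conjList, Formula.top, depth_neg, depth]
  | cons a l ih =>
    rw [conjList, depth_and]
    exact max_le (h a (by simp)) (ih fun χ hχ => h χ (by simp [hχ]))

lemma depth_disjList {l : List Formula} {n : ℕ} (h : ∀ χ ∈ l, χ.depth ≤ n) :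
    (disjList l).depth ≤ n := by
  induction l with
  | nil => simp [disjList, depth]
  | cons a l ih =>
    rw [disjList, depth_fOr]
    exact max_le (h a (by simp)) (ih fun χ hχ => h χ (by simp [hχ]))

lemma fml_zero_depth (t : Ty 0) : (fml P Q 0 t).depth = 0 := by
  rw [fml]
  apply Nat.le_antisymm _ (Nat.zero_le _)
  apply depth_conjList
  intro χ hχ
  rcases List.mem_append.1 hχ with h | h
  · obtain ⟨p, hp, rfl⟩ := List.mem_map.1 h; simp [depth]
  · obtain ⟨q, hq, rfl⟩ := List.mem_map.1 h; simp [depth_neg, depth]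

lemma fml_depth : ∀ n (t : Ty n), (fml P Q n t).depth ≤ n := by
  intro n
  induction n with
  | zero => intro t; exact le_of_eq (fml_zero_depth P Q t)
  | succ n ih =>
    intro t
    rw [fml, depth_and, depth_and]
    refine max_le (le_trans (le_of_eq (fml_zero_depth P Q t.1)) (Nat.zero_le _)) (max_le ?_ ?_)
    · apply depth_conjList
      intro χ hχ
      obtain ⟨s, hs, rfl⟩ := List.mem_map.1 hχ
      rw [depth_dia]
      exact Nat.succ_le_succ (ih s)
    · show (disjList _).depth + 1 ≤ n + 1
      exact Nat.succ_le_succ (depth_disjList fun χ hχ => by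
        obtain ⟨s, hs, rfl⟩ := List.mem_map.1 hχ
        exact ih s)

end ULdev
namespace ULdev
open Formula

variable (P Q : Finset ℕ)

/-- Layered directed zigzag relation. -/
def Sim (M M' : KripkeModel) : ℕ → M.W → M'.W → Prop
  | 0, w, w' => (∀ p ∈ P, M.val w p → M'.val w' p) ∧ (∀ q ∈ Q, M'.val w' q → M.val w q)
  | n + 1, w, w' =>
    ((∀ p ∈ P, M.val w p → M'.val w' p) ∧ (∀ q ∈ Q, M'.val w' q → M.val w q)) ∧
    (∀ x, M.rel w x → ∃ x', M'.rel w' x' ∧ Sim M M' n x x') ∧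
    (∀ x', M'.rel w' x' → ∃ x, M.rel w x ∧ Sim M M' n x x')

lemma sim_atoms {M M' : KripkeModel} {n : ℕ} {w : M.W} {w' : M'.W}
    (h : Sim P Q M M' n w w') :
    (∀ p ∈ P, M.val w p → M'.val w' p) ∧ (∀ q ∈ Q, M'.val w' q → M.val w q) := by
  cases n with
  | zero => exact h
  | succ n => exact h.1

/-- Every world satisfies its own characteristic formula. -/
lemma sat_fml_ty (M : KripkeModel) : ∀ n (w : M.W), M.Sat (fml P Q n (ty P Q M n w)) w := by
  classical
  have base : ∀ (w : M.W) (A B : Finset ℕ), A ⊆ P.filter (fun p => M.val w p) →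
      B ⊆ Q.filter (fun q => ¬ M.val w q) → M.Sat (fml P Q 0 (A, B)) w := by
    intro w A B hA hB
    rw [fml.eq_1 P Q (A, B), sat_conjList]
    intro χ hχ
    rcases List.mem_append.1 hχ with h | h
    · obtain ⟨p, hp, rfl⟩ := List.mem_map.1 h
      have := hA (Finset.mem_inter.1 (Finset.mem_toList.1 hp)).1
      exact (Finset.mem_filter.1 this).2
    · obtain ⟨q, hq, rfl⟩ := List.mem_map.1 h
      have := hB (Finset.mem_inter.1 (Finset.mem_toList.1 hq)).1
      exact (Finset.mem_filter.1 this).2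
  intro n
  induction n with
  | zero =>
    intro w
    rw [ty]
    exact base w _ _ (le_refl _) (le_refl _)
  | succ n ih =>
    intro w
    rw [fml, sat_and, sat_and]
    refine ⟨?_, ?_, ?_⟩
    · have : (ty P Q M (n+1) w).1 = (P.filter (fun p => M.val w p),
          Q.filter (fun q => ¬ M.val w q)) := by rw [ty]
      rw [this]
      exact base w _ _ (le_refl _) (le_refl _)
    · rw [sat_conjList]
      intro χ hχ
      obtain ⟨s, hs, rfl⟩ := List.mem_map.1 hχ
      rw [Finset.mem_toList] at hs
      obtain ⟨x, hx, rfl⟩ := (ty_succ_snd P Q M n w).1 hs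
      rw [sat_dia]
      exact ⟨x, hx, ih x⟩
    · rw [sat_box]
      intro x hx
      rw [sat_disjList]
      refine ⟨fml P Q n (ty P Q M n x), List.mem_map.2 ⟨ty P Q M n x, ?_, rfl⟩, ih x⟩
      rw [Finset.mem_toList]
      exact (ty_succ_snd P Q M n w).2 ⟨x, hx, rfl⟩

/-- Satisfying the characteristic formula of `w` yields a simulation from `w`. -/
lemma sim_of_sat_fml {M M' : KripkeModel} :
    ∀ n (w : M.W) (w' : M'.W), M'.Sat (fml P Q n (ty P Q M n w)) w' →
      Sim P Q M M' n w w' := by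
  classical
  have atoms : ∀ (w : M.W) (w' : M'.W),
      M'.Sat (fml P Q 0 (P.filter (fun p => M.val w p),
        Q.filter (fun q => ¬ M.val w q))) w' →
      (∀ p ∈ P, M.val w p → M'.val w' p) ∧ (∀ q ∈ Q, M'.val w' q → M.val w q) := by
    intro w w' h
    rw [fml.eq_1 P Q (P.filter (fun p => M.val w p), Q.filter (fun q => ¬ M.val w q)), sat_conjList] at h
    constructor
    · intro p hp hval
      have hmem : p ∈ (P.filter (fun p => M.val w p) ∩ P).toList :=
        Finset.mem_toList.2 (Finset.mem_inter.2 ⟨Finset.mem_filter.2 ⟨hp, hval⟩, hp⟩)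
      exact h (Formula.var p) (List.mem_append.2 (Or.inl (List.mem_map.2 ⟨p, hmem, rfl⟩)))
    · intro q hq hval
      by_contra hneg
      have hmem : q ∈ (Q.filter (fun q => ¬ M.val w q) ∩ Q).toList :=
        Finset.mem_toList.2 (Finset.mem_inter.2 ⟨Finset.mem_filter.2 ⟨hq, hneg⟩, hq⟩)
      have := h ((Formula.var q).neg)
        (List.mem_append.2 (Or.inr (List.mem_map.2 ⟨q, hmem, rfl⟩)))
      exact this hval
  intro n
  induction n with
  | zero =>
    intro w w' h
    rw [ty] at h
    exact atoms w w' h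
  | succ n ih =>
    intro w w' h
    rw [fml, sat_and, sat_and] at h
    obtain ⟨h0, hdia, hbox⟩ := h
    refine ⟨?_, ?_, ?_⟩
    · apply atoms w w'
      have : (ty P Q M (n+1) w).1 = (P.filter (fun p => M.val w p),
          Q.filter (fun q => ¬ M.val w q)) := by rw [ty]
      rwa [this] at h0
    · intro x hx
      rw [sat_conjList] at hdia
      have hmem : (fml P Q n (ty P Q M n x)).dia ∈
          ((ty P Q M (n+1) w).2.toList.map (fun s => (fml P Q n s).dia)) := by
        refine List.mem_map.2 ⟨ty P Q M n x, ?_, rfl⟩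
        rw [Finset.mem_toList]
        exact (ty_succ_snd P Q M n w).2 ⟨x, hx, rfl⟩
      have := hdia _ hmem
      rw [sat_dia] at this
      obtain ⟨x', hx', hsat⟩ := this
      exact ⟨x', hx', ih x x' hsat⟩
    · intro x' hx'
      rw [sat_box] at hbox
      have := hbox x' hx'
      rw [sat_disjList] at this
      obtain ⟨χ, hχ, hsat⟩ := this
      obtain ⟨s, hs, rfl⟩ := List.mem_map.1 hχ
      rw [Finset.mem_toList] at hs
      obtain ⟨x, hx, rfl⟩ := (ty_succ_snd P Q M n w).1 hs
      exact ⟨x, hx, ih x x' hsat⟩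

/-- The transfer lemma: simulations transfer signed formulas. -/
lemma sim_transfer {M M' : KripkeModel} :
    ∀ (ρ : Formula) (n : ℕ) (w : M.W) (w' : M'.W), Sim P Q M M' n w w' → ρ.depth ≤ n →
      ((ρ.vpos ⊆ P → ρ.vneg ⊆ Q → M.Sat ρ w → M'.Sat ρ w') ∧
       (ρ.vpos ⊆ Q → ρ.vneg ⊆ P → M'.Sat ρ w' → M.Sat ρ w)) := by
  intro ρ
  induction ρ with
  | var p =>
    intro n w w' hsim _
    constructor
    · intro hpos _ hsat
      exact (sim_atoms P Q hsim).1 p (hpos (by simp [vpos, vsgn])) hsat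
    · intro hpos _ hsat
      exact (sim_atoms P Q hsim).2 p (hpos (by simp [vpos, vsgn])) hsat
  | bot =>
    intro n w w' _ _
    exact ⟨fun _ _ h => h.elim, fun _ _ h => h.elim⟩
  | imp a b iha ihb =>
    intro n w w' hsim hd
    rw [depth] at hd
    have hda : a.depth ≤ n := le_trans (le_max_left _ _) hd
    have hdb : b.depth ≤ n := le_trans (le_max_right _ _) hd
    constructor
    · intro hpos hneg hsat ha
      have hpa : a.vpos ⊆ Q := by
        intro x hx; exact hneg (by rw [vneg, vsgn]; exact Finset.mem_union_left _ hx)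
      have hna : a.vneg ⊆ P := by
        intro x hx; exact hpos (by rw [vpos, vsgn]; exact Finset.mem_union_left _ hx)
      have hpb : b.vpos ⊆ P := by
        intro x hx; exact hpos (by rw [vpos, vsgn]; exact Finset.mem_union_right _ hx)
      have hnb : b.vneg ⊆ Q := by
        intro x hx; exact hneg (by rw [vneg, vsgn]; exact Finset.mem_union_right _ hx)
      exact (ihb n w w' hsim hdb).1 hpb hnb (hsat ((iha n w w' hsim hda).2 hpa hna ha))
    · intro hpos hneg hsat ha
      have hpa : a.vpos ⊆ P := by
        intro x hx; exact hneg (by rw [vneg, vsgn]; exact Finset.mem_union_left _ hx)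
      have hna : a.vneg ⊆ Q := by
        intro x hx; exact hpos (by rw [vpos, vsgn]; exact Finset.mem_union_left _ hx)
      have hpb : b.vpos ⊆ Q := by
        intro x hx; exact hpos (by rw [vpos, vsgn]; exact Finset.mem_union_right _ hx)
      have hnb : b.vneg ⊆ P := by
        intro x hx; exact hneg (by rw [vneg, vsgn]; exact Finset.mem_union_right _ hx)
      exact (ihb n w w' hsim hdb).2 hpb hnb (hsat ((iha n w w' hsim hda).1 hpa hna ha))
  | box a iha =>
    intro n w w' hsim hd
    rw [depth] at hd
    cases n with
    | zero => exact absurd hd (by simp)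
    | succ n =>
      have hda : a.depth ≤ n := Nat.le_of_succ_le_succ hd
      have hpa : (Formula.box a).vpos = a.vpos := by rw [vpos, vpos, vsgn]
      have hna : (Formula.box a).vneg = a.vneg := by rw [vneg, vneg, vsgn]
      constructor
      · intro hpos hneg hsat x' hx'
        obtain ⟨x, hx, hsimx⟩ := hsim.2.2 x' hx'
        exact (iha n x x' hsimx hda).1 (hpa ▸ hpos) (hna ▸ hneg) (hsat x hx)
      · intro hpos hneg hsat x hx
        obtain ⟨x', hx', hsimx⟩ := hsim.2.1 x hx
        exact (iha n x x' hsimx hda).2 (hpa ▸ hpos) (hna ▸ hneg) (hsat x' hx')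

end ULdev
namespace ULdev
open Formula

section Amalgam

variable (M M' : KripkeModel) (P2 Q2 PA QA PB QB : Finset ℕ)

/-- Worlds of the amalgamated model. -/
def AmW : Type :=
  {t : M.W × M'.W × ℕ // Sim P2 Q2 M M' t.2.2 t.1 t.2.1} ⊕ M'.W

/-- Base (forward) edges. -/
def amRel : AmW M M' P2 Q2 → AmW M M' P2 Q2 → Prop
  | .inl a, .inl b => M.rel a.1.1 b.1.1 ∧ M'.rel a.1.2.1 b.1.2.1 ∧ a.1.2.2 = b.1.2.2 + 1
  | .inl a, .inr y' => a.1.2.2 = 0 ∧ M'.rel a.1.2.1 y'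
  | .inr _, .inl _ => False
  | .inr x', .inr y' => M'.rel x' y'

def amVal : AmW M M' P2 Q2 → ℕ → Prop
  | .inl a, p => (M.val a.1.1 p ∧ p ∈ PA) ∨ (M'.val a.1.2.1 p ∧ p ∈ QB)
  | .inr x', p => M'.val x' p

/-- The amalgamated model for the serial case. -/
noncomputable def amM : KripkeModel :=
  ⟨AmW M M' P2 Q2, ⟨Sum.inr (Classical.choice M'.nonempty)⟩,
    amRel M M' P2 Q2, amVal M M' P2 Q2 PA QB⟩

variable {M M' P2 Q2 PA QA PB QB}

lemma amM_serial (hM : M ∈ SerialCl) (hM' : M' ∈ SerialCl) :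
    amM M M' P2 Q2 PA QB ∈ SerialCl := by
  rintro (⟨⟨x, x', k⟩, hc⟩ | x')
  · cases k with
    | zero =>
      obtain ⟨y', hy'⟩ := hM' x'
      exact ⟨Sum.inr y', rfl, hy'⟩
    | succ k =>
      obtain ⟨y, hy⟩ := hM x
      obtain ⟨y', hy', hsim⟩ := hc.2.1 y hy
      exact ⟨Sum.inl ⟨(y, y', k), hsim⟩, hy, hy', rfl⟩
  · obtain ⟨y', hy'⟩ := hM' x'
    exact ⟨Sum.inr y', hy'⟩

variable (hA : QA ∩ QB ⊆ Q2) (hB : PA ∩ PB ⊆ P2)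

include hA in
/-- Left simulation into the KD amalgam. -/
lemma amM_simA :
    ∀ (k : ℕ) (x : M.W) (x' : M'.W) (hc : Sim P2 Q2 M M' k x x'),
      Sim PA QA M (amM M M' P2 Q2 PA QB) k x (Sum.inl ⟨(x, x', k), hc⟩) := by
  intro k
  induction k with
  | zero =>
    intro x x' hc
    refine ⟨fun p hp hv => Or.inl ⟨hv, hp⟩, fun q hq hv => ?_⟩
    rcases hv with ⟨hv, _⟩ | ⟨hv, hqB⟩
    · exact hv
    · exact (sim_atoms P2 Q2 hc).2 q (hA (Finset.mem_inter.2 ⟨hq, hqB⟩)) hv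
  | succ k ih =>
    intro x x' hc
    refine ⟨⟨fun p hp hv => Or.inl ⟨hv, hp⟩, fun q hq hv => ?_⟩, ?_, ?_⟩
    · rcases hv with ⟨hv, _⟩ | ⟨hv, hqB⟩
      · exact hv
      · exact (sim_atoms P2 Q2 hc).2 q (hA (Finset.mem_inter.2 ⟨hq, hqB⟩)) hv
    · intro y hy
      obtain ⟨y', hy', hsim⟩ := hc.2.1 y hy
      exact ⟨Sum.inl ⟨(y, y', k), hsim⟩, ⟨hy, hy', rfl⟩, ih y y' hsim⟩
    · rintro (⟨⟨y, y', j⟩, hcy⟩ | y') hrel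
      · obtain ⟨h1, h2, h3⟩ := hrel
        have : j = k := Nat.succ_injective h3.symm
        subst this
        exact ⟨y, h1, ih y y' hcy⟩
      · exact absurd hrel.1 (Nat.succ_ne_zero k)

include hB in
/-- Right simulation out of the KD amalgam, at every depth. -/
lemma amM_simB :
    ∀ m : ℕ,
      (∀ (k : ℕ) (x : M.W) (x' : M'.W) (hc : Sim P2 Q2 M M' k x x'),
        Sim PB QB (amM M M' P2 Q2 PA QB) M' m (Sum.inl ⟨(x, x', k), hc⟩) x') ∧
      (∀ y' : M'.W, Sim PB QB (amM M M' P2 Q2 PA QB) M' m (Sum.inr y') y') := by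
  intro m
  induction m with
  | zero =>
    constructor
    · intro k x x' hc
      refine ⟨fun p hp hv => ?_, fun q hq hv => Or.inr ⟨hv, hq⟩⟩
      rcases hv with ⟨hv, hpA⟩ | ⟨hv, _⟩
      · exact (sim_atoms P2 Q2 hc).1 p (hB (Finset.mem_inter.2 ⟨hpA, hp⟩)) hv
      · exact hv
    · intro y'
      exact ⟨fun p hp hv => hv, fun q hq hv => hv⟩
  | succ m ih =>
    constructor
    · intro k x x' hc
      refine ⟨⟨fun p hp hv => ?_, fun q hq hv => Or.inr ⟨hv, hq⟩⟩, ?_, ?_⟩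
      · rcases hv with ⟨hv, hpA⟩ | ⟨hv, _⟩
        · exact (sim_atoms P2 Q2 hc).1 p (hB (Finset.mem_inter.2 ⟨hpA, hp⟩)) hv
        · exact hv
      · rintro (⟨⟨y, y', j⟩, hcy⟩ | y') hrel
        · exact ⟨y', hrel.2.1, ih.1 j y y' hcy⟩
        · exact ⟨y', hrel.2, ih.2 y'⟩
      · intro y' hy'
        cases k with
        | zero => exact ⟨Sum.inr y', ⟨rfl, hy'⟩, ih.2 y'⟩
        | succ k =>
          obtain ⟨y, hy, hsim⟩ := hc.2.2 y' hy'
          exact ⟨Sum.inl ⟨(y, y', k), hsim⟩, ⟨hy, hy', rfl⟩, ih.1 k y y' hsim⟩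
    · intro y'
      refine ⟨⟨fun p hp hv => hv, fun q hq hv => hv⟩, ?_, ?_⟩
      · rintro (⟨⟨z, z', j⟩, hcz⟩ | z') hrel
        · exact absurd hrel (fun h => h)
        · exact ⟨z', hrel, ih.2 z'⟩
      · intro z' hz'
        exact ⟨Sum.inr z', hz', ih.2 z'⟩

end Amalgam

end ULdev
namespace ULdev
open Formula

section AmalgamSym

variable (M M' : KripkeModel) (P2 Q2 PA QA PB QB : Finset ℕ)

/-- Symmetric closure of the base edges. -/
def amRelS (a b : AmW M M' P2 Q2) : Prop :=
  amRel M M' P2 Q2 a b ∨ amRel M M' P2 Q2 b a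

/-- The amalgamated model for the serial symmetric case. -/
noncomputable def amMS : KripkeModel :=
  ⟨AmW M M' P2 Q2, ⟨Sum.inr (Classical.choice M'.nonempty)⟩,
    amRelS M M' P2 Q2, amVal M M' P2 Q2 PA QB⟩

variable {M M' P2 Q2 PA QA PB QB}

lemma amMS_sersym (hM : M ∈ SerSymCl) (hM' : M' ∈ SerSymCl) :
    amMS M M' P2 Q2 PA QB ∈ SerSymCl := by
  constructor
  · rintro (⟨⟨x, x', k⟩, hc⟩ | x')
    · cases k with
      | zero =>
        obtain ⟨y', hy'⟩ := hM'.1 x'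
        exact ⟨Sum.inr y', Or.inl ⟨rfl, hy'⟩⟩
      | succ k =>
        obtain ⟨y, hy⟩ := hM.1 x
        obtain ⟨y', hy', hsim⟩ := hc.2.1 y hy
        exact ⟨Sum.inl ⟨(y, y', k), hsim⟩, Or.inl ⟨hy, hy', rfl⟩⟩
    · obtain ⟨y', hy'⟩ := hM'.1 x'
      exact ⟨Sum.inr y', Or.inl hy'⟩
  · intro a b hab
    exact hab.symm

variable (hA : QA ∩ QB ⊆ Q2) (hB : PA ∩ PB ⊆ P2)

include hA in
/-- Left simulation into the KDB amalgam. -/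
lemma amMS_simA (hMsym : ∀ u v, M.rel u v → M.rel v u) :
    ∀ (j k : ℕ) (x : M.W) (x' : M'.W) (hc : Sim P2 Q2 M M' k x x'), j ≤ k →
      Sim PA QA M (amMS M M' P2 Q2 PA QB) j x (Sum.inl ⟨(x, x', k), hc⟩) := by
  intro j
  induction j with
  | zero =>
    intro k x x' hc _
    refine ⟨fun p hp hv => Or.inl ⟨hv, hp⟩, fun q hq hv => ?_⟩
    rcases hv with ⟨hv, _⟩ | ⟨hv, hqB⟩
    · exact hv
    · exact (sim_atoms P2 Q2 hc).2 q (hA (Finset.mem_inter.2 ⟨hq, hqB⟩)) hv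
  | succ j ih =>
    intro k x x' hc hjk
    obtain ⟨k1, rfl⟩ : ∃ k', k = k' + 1 := by
      cases k with
      | zero => exact absurd hjk (by simp)
      | succ k => exact ⟨k, rfl⟩
    refine ⟨⟨fun p hp hv => Or.inl ⟨hv, hp⟩, fun q hq hv => ?_⟩, ?_, ?_⟩
    · rcases hv with ⟨hv, _⟩ | ⟨hv, hqB⟩
      · exact hv
      · exact (sim_atoms P2 Q2 hc).2 q (hA (Finset.mem_inter.2 ⟨hq, hqB⟩)) hv
    · intro y hy
      obtain ⟨y', hy', hsim⟩ := hc.2.1 y hy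
      exact ⟨Sum.inl ⟨(y, y', k1), hsim⟩, Or.inl ⟨hy, hy', rfl⟩,
        ih k1 y y' hsim (Nat.le_of_succ_le_succ hjk)⟩
    · rintro (⟨⟨y, y', i⟩, hcy⟩ | y') hrel
      · rcases hrel with ⟨h1, h2, h3⟩ | ⟨h1, h2, h3⟩
        · have h3' : k1 + 1 = i + 1 := h3
          have hjk' : j + 1 ≤ k1 + 1 := hjk
          exact ⟨y, h1, ih i y y' hcy (by omega)⟩
        · have h3' : i = k1 + 1 + 1 := h3
          have hjk' : j + 1 ≤ k1 + 1 := hjk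
          exact ⟨y, hMsym y x h1, ih i y y' hcy (by omega)⟩
      · rcases hrel with ⟨h1, _⟩ | h1
        · exact absurd h1 (Nat.succ_ne_zero k1)
        · exact absurd h1 (fun h => h)

include hB in
/-- Right simulation out of the KDB amalgam, at every depth. -/
lemma amMS_simB (hM'sym : ∀ u v, M'.rel u v → M'.rel v u) :
    ∀ m : ℕ,
      (∀ (k : ℕ) (x : M.W) (x' : M'.W) (hc : Sim P2 Q2 M M' k x x'),
        Sim PB QB (amMS M M' P2 Q2 PA QB) M' m (Sum.inl ⟨(x, x', k), hc⟩) x') ∧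
      (∀ y' : M'.W, Sim PB QB (amMS M M' P2 Q2 PA QB) M' m (Sum.inr y') y') := by
  intro m
  induction m with
  | zero =>
    constructor
    · intro k x x' hc
      refine ⟨fun p hp hv => ?_, fun q hq hv => Or.inr ⟨hv, hq⟩⟩
      rcases hv with ⟨hv, hpA⟩ | ⟨hv, _⟩
      · exact (sim_atoms P2 Q2 hc).1 p (hB (Finset.mem_inter.2 ⟨hpA, hp⟩)) hv
      · exact hv
    · intro y'
      exact ⟨fun p hp hv => hv, fun q hq hv => hv⟩
  | succ m ih =>
    constructor
    · intro k x x' hc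
      refine ⟨⟨fun p hp hv => ?_, fun q hq hv => Or.inr ⟨hv, hq⟩⟩, ?_, ?_⟩
      · rcases hv with ⟨hv, hpA⟩ | ⟨hv, _⟩
        · exact (sim_atoms P2 Q2 hc).1 p (hB (Finset.mem_inter.2 ⟨hpA, hp⟩)) hv
        · exact hv
      · rintro (⟨⟨y, y', i⟩, hcy⟩ | y') hrel
        · rcases hrel with ⟨h1, h2, h3⟩ | ⟨h1, h2, h3⟩
          · exact ⟨y', h2, ih.1 i y y' hcy⟩
          · exact ⟨y', hM'sym y' x' h2, ih.1 i y y' hcy⟩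
        · rcases hrel with ⟨h1, h2⟩ | h2
          · exact ⟨y', h2, ih.2 y'⟩
          · exact absurd h2 (fun h => h)
      · intro y' hy'
        cases k with
        | zero => exact ⟨Sum.inr y', Or.inl ⟨rfl, hy'⟩, ih.2 y'⟩
        | succ k =>
          obtain ⟨y, hy, hsim⟩ := hc.2.2 y' hy'
          exact ⟨Sum.inl ⟨(y, y', k), hsim⟩, Or.inl ⟨hy, hy', rfl⟩, ih.1 k y y' hsim⟩
    · intro y'
      refine ⟨⟨fun p hp hv => hv, fun q hq hv => hv⟩, ?_, ?_⟩
      · rintro (⟨⟨z, z', i⟩, hcz⟩ | z') hrel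
        · rcases hrel with h1 | ⟨h1, h2⟩
          · exact absurd h1 (fun h => h)
          · exact ⟨z', hM'sym z' y' h2, ih.1 i z z' hcz⟩
        · rcases hrel with h1 | h1
          · exact ⟨z', h1, ih.2 z'⟩
          · exact ⟨z', hM'sym z' y' h1, ih.2 z'⟩
      · intro z' hz'
        exact ⟨Sum.inr z', Or.inl hz', ih.2 z'⟩

end AmalgamSym

end ULdev
namespace ULdev
open Formula

/-- Generic ULIP with depth bound from soundness, completeness, and amalgamation. -/
theorem gen_ulip {L : Set Formula} {Cl : Set KripkeModel}
    (hsound : ∀ φ ∈ L, Valid Cl φ) (hcomp : ∀ φ, Valid Cl φ → φ ∈ L)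
    (ham : ∀ (P2 Q2 PA QA PB QB : Finset ℕ), QA ∩ QB ⊆ Q2 → PA ∩ PB ⊆ P2 →
      ∀ M ∈ Cl, ∀ M' ∈ Cl, ∀ (n : ℕ) (w : M.W) (w' : M'.W), Sim P2 Q2 M M' n w w' →
        ∃ Mst ∈ Cl, ∃ wst : Mst.W,
          Sim PA QA M Mst n w wst ∧ ∀ m, Sim PB QB Mst M' m wst w') :
    ∀ (φ : Formula) (P Q : Finset ℕ), ∃ θ, IsULInterpolant L φ P Q θ ∧ θ.depth ≤ φ.depth := by
  classical
  intro φ P Q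
  set P2 : Finset ℕ := φ.vpos \ P with hP2
  set Q2 : Finset ℕ := φ.vneg \ Q with hQ2
  set n : ℕ := φ.depth with hn
  set lst : List (Ty n) := ((allTy P2 Q2 n).filter
    (fun t => ∃ M, M ∈ Cl ∧ ∃ w : M.W, M.Sat φ w ∧ ty P2 Q2 M n w = t)).toList with hlst
  set θ : Formula := disjList (lst.map (fml P2 Q2 n)) with hθ
  have hmem : ∀ χ ∈ lst.map (fml P2 Q2 n), ∃ t, χ = fml P2 Q2 n t := by
    intro χ hχ
    obtain ⟨t, _, rfl⟩ := List.mem_map.1 hχ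
    exact ⟨t, rfl⟩
  refine ⟨θ, ⟨?_, ?_, ?_, ?_⟩, ?_⟩
  · -- vpos
    apply vsgn_disjList
    intro χ hχ
    obtain ⟨t, rfl⟩ := hmem χ hχ
    exact fml_vpos P2 Q2 n t
  · -- vneg
    apply vsgn_disjList
    intro χ hχ
    obtain ⟨t, rfl⟩ := hmem χ hχ
    exact fml_vneg P2 Q2 n t
  · -- φ → θ
    apply hcomp
    intro M hM w
    rw [sat_imp]
    intro hsat
    rw [hθ, sat_disjList]
    refine ⟨fml P2 Q2 n (ty P2 Q2 M n w), List.mem_map.2 ⟨ty P2 Q2 M n w, ?_, rfl⟩,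
      sat_fml_ty P2 Q2 M n w⟩
    rw [hlst, Finset.mem_toList, Finset.mem_filter]
    exact ⟨ty_mem_allTy P2 Q2 M n w, M, hM, w, hsat, rfl⟩
  · -- minimality
    intro ψ hψpos hψneg himp
    apply hcomp
    intro M' hM' w'
    rw [sat_imp]
    intro hθsat
    rw [hθ, sat_disjList] at hθsat
    obtain ⟨χ, hχmem, hχsat⟩ := hθsat
    obtain ⟨t, htl, rfl⟩ := List.mem_map.1 hχmem
    rw [hlst, Finset.mem_toList, Finset.mem_filter] at htl
    obtain ⟨-, M, hM, w, hφsat, rfl⟩ := htl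
    have hsim : Sim P2 Q2 M M' n w w' := sim_of_sat_fml P2 Q2 n w w' hχsat
    have hA : φ.vneg ∩ (Q2 ∪ ψ.vneg) ⊆ Q2 := by
      intro q hq
      obtain ⟨hq1, hq2⟩ := Finset.mem_inter.1 hq
      rcases Finset.mem_union.1 hq2 with h | h
      · exact h
      · rw [hQ2, Finset.mem_sdiff]
        refine ⟨hq1, fun hqQ => ?_⟩
        have : q ∈ ψ.vneg ∩ Q := Finset.mem_inter.2 ⟨h, hqQ⟩
        rw [hψneg] at this
        exact absurd this (Finset.notMem_empty q)
    have hB : φ.vpos ∩ (P2 ∪ ψ.vpos) ⊆ P2 := by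
      intro p hp
      obtain ⟨hp1, hp2⟩ := Finset.mem_inter.1 hp
      rcases Finset.mem_union.1 hp2 with h | h
      · exact h
      · rw [hP2, Finset.mem_sdiff]
        refine ⟨hp1, fun hpP => ?_⟩
        have : p ∈ ψ.vpos ∩ P := Finset.mem_inter.2 ⟨h, hpP⟩
        rw [hψpos] at this
        exact absurd this (Finset.notMem_empty p)
    obtain ⟨Mst, hMst, wst, hsimA, hsimB⟩ :=
      ham P2 Q2 φ.vpos φ.vneg (P2 ∪ ψ.vpos) (Q2 ∪ ψ.vneg) hA hB M hM M' hM' n w w' hsim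
    have hφst : Mst.Sat φ wst :=
      (sim_transfer φ.vpos φ.vneg φ n w wst hsimA le_rfl).1 le_rfl le_rfl hφsat
    have hψst : Mst.Sat ψ wst := hsound _ himp Mst hMst wst hφst
    exact (sim_transfer (P2 ∪ ψ.vpos) (Q2 ∪ ψ.vneg) ψ ψ.depth wst w'
      (hsimB ψ.depth) le_rfl).1 Finset.subset_union_right Finset.subset_union_right hψst
  · -- depth
    apply depth_disjList
    intro χ hχ
    obtain ⟨t, rfl⟩ := hmem χ hχ
    exact fml_depth P2 Q2 n t

lemma ham_serial : ∀ (P2 Q2 PA QA PB QB : Finset ℕ), QA ∩ QB ⊆ Q2 → PA ∩ PB ⊆ P2 →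
    ∀ M ∈ SerialCl, ∀ M' ∈ SerialCl, ∀ (n : ℕ) (w : M.W) (w' : M'.W),
      Sim P2 Q2 M M' n w w' →
      ∃ Mst ∈ SerialCl, ∃ wst : Mst.W,
        Sim PA QA M Mst n w wst ∧ ∀ m, Sim PB QB Mst M' m wst w' := by
  intro P2 Q2 PA QA PB QB hA hB M hM M' hM' n w w' hsim
  exact ⟨amM M M' P2 Q2 PA QB, amM_serial hM hM', Sum.inl ⟨(w, w', n), hsim⟩,
    amM_simA hA n w w' hsim, fun m => (amM_simB hB m).1 n w w' hsim⟩

lemma ham_sersym : ∀ (P2 Q2 PA QA PB QB : Finset ℕ), QA ∩ QB ⊆ Q2 → PA ∩ PB ⊆ P2 →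
    ∀ M ∈ SerSymCl, ∀ M' ∈ SerSymCl, ∀ (n : ℕ) (w : M.W) (w' : M'.W),
      Sim P2 Q2 M M' n w w' →
      ∃ Mst ∈ SerSymCl, ∃ wst : Mst.W,
        Sim PA QA M Mst n w wst ∧ ∀ m, Sim PB QB Mst M' m wst w' := by
  intro P2 Q2 PA QA PB QB hA hB M hM M' hM' n w w' hsim
  exact ⟨amMS M M' P2 Q2 PA QB, amMS_sersym hM hM', Sum.inl ⟨(w, w', n), hsim⟩,
    amMS_simA hA hM.2 n n w w' hsim le_rfl, fun m => (amMS_simB hB hM'.2 m).1 n w w' hsim⟩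

theorem ulip_KD_depth : ∀ (φ : Formula) (P Q : Finset ℕ),
    ∃ θ, IsULInterpolant TheoryKD φ P Q θ ∧ θ.depth ≤ φ.depth :=
  gen_ulip soundness_KD (fun _ => completeness_KD) ham_serial

theorem ulip_KDB_depth : ∀ (φ : Formula) (P Q : Finset ℕ),
    ∃ θ, IsULInterpolant TheoryKDB φ P Q θ ∧ θ.depth ≤ φ.depth :=
  gen_ulip soundness_KDB (fun _ => completeness_KDB) ham_sersym

end ULdev

/-- KD and KDB enjoy ULIP, with interpolants of depth at most d(φ). -/
theorem ulip_KD_KDB :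
    (ULIP TheoryKD ∧ ∀ (φ : Formula) (P Q : Finset ℕ), ∃ θ : Formula,
        IsULInterpolant TheoryKD φ P Q θ ∧ θ.depth ≤ φ.depth) ∧
    (ULIP TheoryKDB ∧ ∀ (φ : Formula) (P Q : Finset ℕ), ∃ θ : Formula,
        IsULInterpolant TheoryKDB φ P Q θ ∧ θ.depth ≤ φ.depth) := by
  refine ⟨⟨?_, ULdev.ulip_KD_depth⟩, ⟨?_, ULdev.ulip_KDB_depth⟩⟩
  · intro φ P Q
    obtain ⟨θ, hθ, -⟩ := ULdev.ulip_KD_depth φ P Q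
    exact ⟨θ, hθ⟩
  · intro φ P Q
    obtain ⟨θ, hθ, -⟩ := ULdev.ulip_KDB_depth φ P Q
    exact ⟨θ, hθ⟩
end

section
/- The modal logics KT and KTB enjoy ULIP; moreover, in each of these logics L, for every formula φ and all finite sets P, Q of propositional variables there exists a uniform Lyndon interpolant θ of (φ,P,Q) in L with d(θ) ≤ d(φ). -/
namespace ULKT
open Formula

/-! ### Satisfaction of abbreviations -/

lemma sat_neg {M : KripkeModel} {φ : Formula} {w : M.W} :
    M.Sat φ.neg w ↔ ¬ M.Sat φ w := by
  constructor
  · intro h hs; exact h hs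
  · intro h hs; exact absurd hs h

lemma sat_and {M : KripkeModel} {φ ψ : Formula} {w : M.W} :
    M.Sat (φ.and ψ) w ↔ M.Sat φ w ∧ M.Sat ψ w := by
  show ((M.Sat φ w → M.Sat ψ w → False) → False) ↔ _
  tauto

lemma sat_top {M : KripkeModel} {w : M.W} : M.Sat Formula.top w :=
  fun h => h

lemma sat_dia {M : KripkeModel} {φ : Formula} {w : M.W} :
    M.Sat φ.dia w ↔ ∃ x, M.rel w x ∧ M.Sat φ x := by
  show ((∀ x, M.rel w x → (M.Sat φ x → False)) → False) ↔ _
  constructor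
  · intro h
    by_contra hne
    exact h fun x hx hs => hne ⟨x, hx, hs⟩
  · rintro ⟨x, hx, hs⟩ h
    exact h x hx hs

/-! ### vsgn and depth of abbreviations -/

lemma vsgn_neg (φ : Formula) (b : Bool) : φ.neg.vsgn b = φ.vsgn (!b) := by
  cases b <;> simp [Formula.neg, Formula.vsgn]

lemma vsgn_and (φ ψ : Formula) (b : Bool) : (φ.and ψ).vsgn b = φ.vsgn b ∪ ψ.vsgn b := by
  cases b <;> simp [Formula.and, Formula.neg, Formula.vsgn]

lemma vsgn_dia (φ : Formula) (b : Bool) : φ.dia.vsgn b = φ.vsgn b := by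
  cases b <;> simp [Formula.dia, Formula.neg, Formula.vsgn]

lemma vsgn_top (b : Bool) : (Formula.top).vsgn b = ∅ := by
  cases b <;> simp [Formula.top, Formula.neg, Formula.vsgn]

lemma depth_neg (φ : Formula) : φ.neg.depth = φ.depth := by
  simp [Formula.neg, Formula.depth]

lemma depth_and (φ ψ : Formula) : (φ.and ψ).depth = max φ.depth ψ.depth := by
  simp [Formula.and, depth_neg, Formula.depth]

lemma depth_dia (φ : Formula) : φ.dia.depth = φ.depth + 1 := by
  simp [Formula.dia, depth_neg, Formula.depth]

/-! ### implication from a list of hypotheses -/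

def lImp : List Formula → Formula → Formula
  | [], χ => χ
  | a :: l, χ => a.imp (lImp l χ)

lemma v_lImp (v : Formula → Bool)
    (himp : ∀ ψ θ : Formula, (v (ψ.imp θ) = true) ↔ (v ψ = true → v θ = true)) :
    ∀ (l : List Formula) (χ : Formula),
      v (lImp l χ) = true ↔ ((∀ a ∈ l, v a = true) → v χ = true) := by
  intro l
  induction l with
  | nil => simp [lImp]
  | cons a l ih =>
      intro χ
      show (v (a.imp (lImp l χ)) = true) ↔ _
      rw [himp, ih]
      constructor
      · intro h hall
        exact h (hall a List.mem_cons_self) fun b hb => hall b (List.mem_cons_of_mem a hb)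
      · intro h ha hall
        exact h fun b hb => by
          rcases List.mem_cons.1 hb with rfl | hb
          · exact ha
          · exact hall b hb

lemma sat_lImp {M : KripkeModel} {w : M.W} :
    ∀ (l : List Formula) (χ : Formula),
      M.Sat (lImp l χ) w ↔ ((∀ a ∈ l, M.Sat a w) → M.Sat χ w) := by
  intro l
  induction l with
  | nil => simp [lImp]
  | cons a l ih =>
      intro χ
      show (M.Sat a w → M.Sat (lImp l χ) w) ↔ _
      rw [ih]
      constructor
      · intro h hall
        exact h (hall a List.mem_cons_self) fun b hb => hall b (List.mem_cons_of_mem a hb)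
      · intro h ha hall
        exact h fun b hb => by
          rcases List.mem_cons.1 hb with rfl | hb
          · exact ha
          · exact hall b hb

end ULKT
namespace ULKT
open Formula

lemma taut_intro (φ : Formula)
    (H : ∀ v : Formula → Bool, (¬ v Formula.bot = true) →
      (∀ a b : Formula, (v (a.imp b) = true) ↔ (v a = true → v b = true)) →
      v φ = true) : Tautology φ := by
  intro v h0 h1
  refine H v (by simp [h0]) fun a b => ?_
  rw [h1]
  cases h : v a <;> cases h2 : v b <;> simp [h, h2]

section Logic
variable {L : Set Formula} (hL : IsNormal L)
include hL

lemma mem_of_taut {φ : Formula}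
    (H : ∀ v : Formula → Bool, (¬ v Formula.bot = true) →
      (∀ a b : Formula, (v (a.imp b) = true) ↔ (v a = true → v b = true)) →
      v φ = true) : φ ∈ L := hL.taut φ (taut_intro φ H)

lemma axK_inst (A B : Formula) : ((A.imp B).box).imp (A.box.imp B.box) ∈ L := by
  have h := hL.subst_mem _ hL.axK (fun n => if n = 0 then A else B)
  simpa [Formula.subst] using h

lemma imp_self_mem (A : Formula) : A.imp A ∈ L := by
  apply mem_of_taut hL
  intro v h0 himp
  rw [himp]; exact id

lemma imp_trans_mem {A B C : Formula} (h1 : A.imp B ∈ L) (h2 : B.imp C ∈ L) :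
    A.imp C ∈ L := by
  have t : ((A.imp B).imp ((B.imp C).imp (A.imp C))) ∈ L := by
    apply mem_of_taut hL
    intro v h0 himp
    simp only [himp]
    tauto
  exact hL.mp _ _ (hL.mp _ _ t h1) h2

lemma box_mono {A B : Formula} (h : A.imp B ∈ L) : A.box.imp B.box ∈ L :=
  hL.mp _ _ (axK_inst hL A B) (hL.nec _ h)

/-- □(lImp l χ) → lImp (l.map box) (□χ) -/
lemma box_lImp : ∀ (l : List Formula) (χ : Formula),
    ((lImp l χ).box).imp (lImp (l.map Formula.box) χ.box) ∈ L := by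
  intro l
  induction l with
  | nil => intro χ; exact imp_self_mem hL _
  | cons a l ih =>
      intro χ
      -- goal : (□(a → lImp l χ)) → (□a → lImp (map box l) (□χ))
      have hK : ((a.imp (lImp l χ)).box).imp (a.box.imp (lImp l χ).box) ∈ L :=
        axK_inst hL _ _
      have hIH : ((lImp l χ).box).imp (lImp (l.map Formula.box) χ.box) ∈ L := ih χ
      -- combine: X → (Y → Z), Z → W  ⊢  X → (Y → W)
      have t : (((a.imp (lImp l χ)).box).imp (a.box.imp (lImp l χ).box)).imp
          ((((lImp l χ).box).imp (lImp (l.map Formula.box) χ.box)).imp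
            (((a.imp (lImp l χ)).box).imp
              (a.box.imp (lImp (l.map Formula.box) χ.box)))) ∈ L := by
        apply mem_of_taut hL
        intro v h0 himp
        simp only [himp]
        tauto
      exact hL.mp _ _ (hL.mp _ _ t hK) hIH

/-! ### Consistency -/

omit hL in
def Incon (L : Set Formula) (Γ : Set Formula) : Prop :=
  ∃ l : List Formula, (∀ a ∈ l, a ∈ Γ) ∧ lImp l Formula.bot ∈ L

def Con (L : Set Formula) (Γ : Set Formula) : Prop := ¬ Incon L Γ

def MCS (L : Set Formula) (Δ : Set Formula) : Prop :=
  Con L Δ ∧ ∀ φ, φ ∉ Δ → Incon L (insert φ Δ)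

/-- Deduction-style lemma. -/
lemma ded {Γ : Set Formula} {φ : Formula} (h : Incon L (insert φ Γ)) :
    ∃ l : List Formula, (∀ a ∈ l, a ∈ Γ) ∧ lImp l φ.neg ∈ L := by
  obtain ⟨l, hmem, hl⟩ := h
  classical
  refine ⟨l.filter (fun a => a ≠ φ), ?_, ?_⟩
  · intro a ha
    have := List.of_mem_filter ha
    rcases hmem a (List.mem_of_mem_filter ha) with h' | h'
    · exact absurd h' (by simpa using this)
    · exact h'
  · have t : (lImp l Formula.bot).imp (lImp (l.filter (fun a => a ≠ φ)) φ.neg) ∈ L := by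
      apply mem_of_taut hL
      intro v h0 himp
      rw [himp]
      intro hli
      rw [v_lImp v himp] at hli ⊢
      intro hall
      show v (φ.imp Formula.bot) = true
      rw [himp]
      intro hφ
      exact absurd (hli (fun a ha => by
        by_cases haφ : a = φ
        · exact haφ ▸ hφ
        · exact hall a (List.mem_filter.2 ⟨ha, by simpa using haφ⟩))) h0
    exact hL.mp _ _ t hl

lemma mcs_mp {Δ : Set Formula} (hΔ : MCS L Δ) {φ ψ : Formula}
    (h1 : φ.imp ψ ∈ Δ) (h2 : φ ∈ Δ) : ψ ∈ Δ := by
  by_contra hψ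
  obtain ⟨l, hmem, hl⟩ := ded hL (hΔ.2 ψ hψ)
  apply hΔ.1
  refine ⟨(φ.imp ψ) :: φ :: l, ?_, ?_⟩
  · intro a ha
    rcases List.mem_cons.1 ha with rfl | ha
    · exact h1
    rcases List.mem_cons.1 ha with rfl | ha
    · exact h2
    · exact hmem a ha
  · have t : (lImp l ψ.neg).imp (lImp ((φ.imp ψ) :: φ :: l) Formula.bot) ∈ L := by
      apply mem_of_taut hL
      intro v h0 himp
      rw [himp, v_lImp v himp, v_lImp v himp]
      intro hli hall
      have h1' := hall _ List.mem_cons_self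
      have h2' := hall _ (List.mem_cons_of_mem _ List.mem_cons_self)
      have hrest : ∀ a ∈ l, v a = true := fun a ha =>
        hall a (List.mem_cons_of_mem _ (List.mem_cons_of_mem _ ha))
      have hψ' : v ψ = true := (himp _ _).1 h1' h2'
      have hv := hli hrest
      rw [Formula.neg] at hv
      rw [himp] at hv
      exact absurd (hv hψ') h0
    exact hL.mp _ _ t hl

lemma mcs_lImp_mem {Δ : Set Formula} (hΔ : MCS L Δ) :
    ∀ {l : List Formula} {χ : Formula}, (∀ a ∈ l, a ∈ Δ) → lImp l χ ∈ Δ → χ ∈ Δ := by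
  intro l
  induction l with
  | nil => intro χ _ h; exact h
  | cons a l ih =>
      intro χ hall h
      exact ih (fun b hb => hall b (List.mem_cons_of_mem _ hb))
        (mcs_mp hL hΔ h (hall a List.mem_cons_self))

lemma mcs_mem_of_prov {Δ : Set Formula} (hΔ : MCS L Δ) {φ : Formula} (h : φ ∈ L) :
    φ ∈ Δ := by
  by_contra hφ
  obtain ⟨l, hmem, hl⟩ := ded hL (hΔ.2 φ hφ)
  apply hΔ.1
  refine ⟨l, hmem, ?_⟩
  have t : φ.imp ((lImp l φ.neg).imp (lImp l Formula.bot)) ∈ L := by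
    apply mem_of_taut hL
    intro v h0 himp
    rw [himp, himp, v_lImp v himp, v_lImp v himp]
    intro hφ hli hall
    have hv := hli hall
    rw [Formula.neg] at hv
    rw [himp] at hv
    exact hv hφ
  exact hL.mp _ _ (hL.mp _ _ t h) hl

lemma mcs_bot_not_mem {Δ : Set Formula} (hΔ : MCS L Δ) : Formula.bot ∉ Δ := by
  intro h
  apply hΔ.1
  exact ⟨[Formula.bot], by simpa using h, by
    show Formula.bot.imp Formula.bot ∈ L
    exact imp_self_mem hL _⟩

lemma mcs_neg_iff {Δ : Set Formula} (hΔ : MCS L Δ) {φ : Formula} :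
    φ.neg ∈ Δ ↔ φ ∉ Δ := by
  constructor
  · intro h hφ
    exact mcs_bot_not_mem hL hΔ (mcs_mp hL hΔ h hφ)
  · intro hφ
    obtain ⟨l, hmem, hl⟩ := ded hL (hΔ.2 φ hφ)
    exact mcs_lImp_mem hL hΔ hmem (mcs_mem_of_prov hL hΔ hl)

lemma mcs_imp_iff {Δ : Set Formula} (hΔ : MCS L Δ) {φ ψ : Formula} :
    φ.imp ψ ∈ Δ ↔ (φ ∈ Δ → ψ ∈ Δ) := by
  constructor
  · exact fun h hφ => mcs_mp hL hΔ h hφ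
  · intro h
    by_cases hφ : φ ∈ Δ
    · have hψ := h hφ
      have t : ψ.imp (φ.imp ψ) ∈ L := by
        apply mem_of_taut hL
        intro v h0 himp
        simp only [himp]; tauto
      exact mcs_mp hL hΔ (mcs_mem_of_prov hL hΔ t) hψ
    · have hn : φ.neg ∈ Δ := (mcs_neg_iff hL hΔ).2 hφ
      have t : (φ.neg).imp (φ.imp ψ) ∈ L := by
        apply mem_of_taut hL
        intro v h0 himp
        show v ((φ.imp Formula.bot).imp (φ.imp ψ)) = true
        simp only [himp]
        intro h1 h2
        exact absurd (h1 h2) h0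
      exact mcs_mp hL hΔ (mcs_mem_of_prov hL hΔ t) hn

/-! ### Lindenbaum -/

omit hL in
lemma chain_finite_sub {c : Set (Set Formula)} (hchain : IsChain (· ⊆ ·) c)
    (hne : c.Nonempty) :
    ∀ l : List Formula, (∀ a ∈ l, a ∈ ⋃₀ c) → ∃ s ∈ c, ∀ a ∈ l, a ∈ s := by
  intro l
  induction l with
  | nil => intro _; exact ⟨hne.choose, hne.choose_spec, by simp⟩
  | cons a l ih =>
      intro h
      obtain ⟨s, hs, hls⟩ := ih fun b hb => h b (List.mem_cons_of_mem _ hb)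
      obtain ⟨t, ht, hat⟩ := h a List.mem_cons_self
      rcases eq_or_ne s t with rfl | hst
      · exact ⟨s, hs, fun b hb => by
          rcases List.mem_cons.1 hb with rfl | hb
          · exact hat
          · exact hls b hb⟩
      rcases hchain hs ht hst with hsub | hsub
      · exact ⟨t, ht, fun b hb => by
          rcases List.mem_cons.1 hb with rfl | hb
          · exact hat
          · exact hsub (hls b hb)⟩
      · exact ⟨s, hs, fun b hb => by
          rcases List.mem_cons.1 hb with rfl | hb
          · exact hsub hat
          · exact hls b hb⟩

omit hL in
lemma lindenbaum {Γ : Set Formula} (hΓ : Con L Γ) :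
    ∃ Δ : Set Formula, MCS L Δ ∧ Γ ⊆ Δ := by
  obtain ⟨Δ, hsub, hmax⟩ := zorn_subset_nonempty {Δ : Set Formula | Γ ⊆ Δ ∧ Con L Δ}
    (fun c hc hchain hne => by
      refine ⟨⋃₀ c, ⟨?_, ?_⟩, fun s hs => Set.subset_sUnion_of_mem hs⟩
      · obtain ⟨s, hs⟩ := hne
        exact (hc hs).1.trans (Set.subset_sUnion_of_mem hs)
      · rintro ⟨l, hmem, hl⟩
        obtain ⟨s, hs, hls⟩ := chain_finite_sub hchain hne l hmem
        exact (hc hs).2 ⟨l, hls, hl⟩)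
    Γ ⟨Set.Subset.rfl, hΓ⟩
  refine ⟨Δ, ⟨hmax.prop.2, fun φ hφ => ?_⟩, hsub⟩
  by_contra hins
  have heq : insert φ Δ ⊆ Δ := hmax.2 (y := insert φ Δ)
    ⟨hmax.prop.1.trans (Set.subset_insert _ _), hins⟩ (Set.subset_insert _ _)
  exact hφ (heq (Set.mem_insert _ _))

end Logic
end ULKT
namespace ULKT
open Formula

section Canonical
variable {L : Set Formula} (hL : IsNormal L)

/-- The canonical model of `L`. -/
noncomputable def canModel (h : ∃ Δ : Set Formula, MCS L Δ) : KripkeModel where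
  W := {Δ : Set Formula // MCS L Δ}
  nonempty := ⟨⟨h.choose, h.choose_spec⟩⟩
  rel := fun Δ Θ => ∀ χ : Formula, χ.box ∈ Δ.1 → χ ∈ Θ.1
  val := fun Δ p => Formula.var p ∈ Δ.1

include hL

lemma truth_lemma (h : ∃ Δ : Set Formula, MCS L Δ) :
    ∀ (χ : Formula) (Δ : (canModel (L := L) h).W),
      (canModel (L := L) h).Sat χ Δ ↔ χ ∈ Δ.1 := by
  intro χ
  induction χ with
  | var p => intro Δ; exact Iff.rfl
  | bot =>
      intro Δ
      show False ↔ _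
      simp [mcs_bot_not_mem hL Δ.2]
  | imp φ ψ ihφ ihψ =>
      intro Δ
      show ((canModel h).Sat φ Δ → (canModel h).Sat ψ Δ) ↔ _
      rw [ihφ Δ, ihψ Δ, mcs_imp_iff hL Δ.2]
  | box φ ih =>
      intro Δ
      show (∀ Θ, _ → (canModel h).Sat φ Θ) ↔ _
      constructor
      · intro hall
        by_contra hbox
        -- the set {ψ | □ψ ∈ Δ} ∪ {¬φ} is consistent
        have hcon : Con L (insert φ.neg {ψ | ψ.box ∈ Δ.1}) := by
          rintro hic
          obtain ⟨l, hmem, hl⟩ := ded hL hic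
          -- lImp l φ.neg.neg ∈ L, members boxed in Δ
          have hlφ : lImp l φ ∈ L := by
            have t : (lImp l φ.neg.neg).imp (lImp l φ) ∈ L := by
              apply mem_of_taut hL
              intro v h0 himp
              rw [himp, v_lImp v himp, v_lImp v himp]
              intro h1 hall2
              have := h1 hall2
              rw [Formula.neg, Formula.neg, himp, himp] at this
              by_cases hv : v φ = true
              · exact hv
              · exact absurd (this (fun h' => absurd (by cases hvφ : v φ; exact hvφ; exact absurd hvφ hv) (by simp [h']))) h0
            exact hL.mp _ _ t hl
          have hbox' : lImp (l.map Formula.box) φ.box ∈ L :=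
            hL.mp _ _ (box_lImp hL l φ) (hL.nec _ hlφ)
          have : φ.box ∈ Δ.1 := by
            apply mcs_lImp_mem hL Δ.2 (l := l.map Formula.box) ?_
              (mcs_mem_of_prov hL Δ.2 hbox')
            intro a ha
            obtain ⟨b, hb, rfl⟩ := List.mem_map.1 ha
            exact hmem b hb
          exact hbox this
        obtain ⟨Θ, hΘ, hsub⟩ := lindenbaum hcon
        have hrel : ∀ χ : Formula, χ.box ∈ Δ.1 → χ ∈ Θ :=
          fun χ hχ => hsub (Set.mem_insert_of_mem _ hχ)
        have hφΘ : φ ∉ Θ := by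
          have : φ.neg ∈ Θ := hsub (Set.mem_insert _ _)
          exact (mcs_neg_iff hL hΘ).1 this
        exact hφΘ ((ih ⟨Θ, hΘ⟩).1 (hall ⟨Θ, hΘ⟩ hrel))
      · intro hbox Θ hrel
        exact (ih Θ).2 (hrel φ hbox)

end Canonical

/-! ### Soundness -/

/-- Model classes: reflexive, plus symmetric if `sym`. -/
def Cl (sym : Bool) : Set KripkeModel :=
  {M | Reflexive M.rel ∧ (sym = true → Symmetric M.rel)}

def ValidOn (C : Set KripkeModel) : Set Formula :=
  {φ | ∀ M ∈ C, ∀ w : M.W, M.Sat φ w}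

lemma sat_subst (M : KripkeModel) (σ : ℕ → Formula) :
    ∀ (χ : Formula) (w : M.W),
      M.Sat (Formula.subst σ χ) w ↔
        (KripkeModel.mk M.W M.nonempty M.rel (fun w p => M.Sat (σ p) w)).Sat χ w := by
  intro χ
  induction χ with
  | var p => intro w; exact Iff.rfl
  | bot => intro w; exact Iff.rfl
  | imp φ ψ ihφ ihψ =>
      intro w
      show (M.Sat (Formula.subst σ φ) w → M.Sat (Formula.subst σ ψ) w) ↔ _
      rw [ihφ w, ihψ w]; exact Iff.rfl
  | box φ ih =>
      intro w
      show (∀ x, M.rel w x → M.Sat (Formula.subst σ φ) x) ↔ _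
      constructor
      · intro h x hx; exact (ih x).1 (h x hx)
      · intro h x hx; exact (ih x).2 (h x hx)

open Classical in
lemma taut_sound {φ : Formula} (h : Tautology φ) (M : KripkeModel) (w : M.W) :
    M.Sat φ w := by
  classical
  have := h (fun χ => decide (M.Sat χ w)) (decide_eq_false fun h => h)
    (fun ψ θ => by
      by_cases hψ : M.Sat ψ w <;> by_cases hθ : M.Sat θ w <;>
        simp [KripkeModel.Sat, hψ, hθ])
  simpa using this

lemma validOn_normal (sym : Bool) : IsNormal (ValidOn (Cl sym)) := by
  constructor
  · intro φ h M _ w; exact taut_sound h M w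
  · intro M _ w
    intro h1 h2 x hx
    exact h1 x hx (h2 x hx)
  · intro φ ψ h1 h2 M hM w
    exact h1 M hM w (h2 M hM w)
  · intro φ h M hM w x _
    exact h M hM x
  · intro φ h σ M hM w
    rw [sat_subst M σ φ w]
    exact h (KripkeModel.mk M.W M.nonempty M.rel (fun w p => M.Sat (σ p) w)) ⟨hM.1, hM.2⟩ w

/-! ### The logics -/

def Ax (sym : Bool) : Set Formula := if sym then {axT, axB} else {axT}

def Lg (sym : Bool) : Set Formula := NormalExt (Ax sym)

lemma normalExt_normal (X : Set Formula) : IsNormal (NormalExt X) := by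
  constructor
  · intro φ h L ⟨hL, _⟩; exact hL.taut φ h
  · intro L ⟨hL, _⟩; exact hL.axK
  · intro φ ψ h1 h2 L hL; exact hL.1.mp φ ψ (h1 L hL) (h2 L hL)
  · intro φ h L hL; exact hL.1.nec φ (h L hL)
  · intro φ h σ L hL; exact hL.1.subst_mem φ (h L hL) σ

lemma subset_normalExt (X : Set Formula) : X ⊆ NormalExt X :=
  fun φ hφ L hL => hL.2 hφ

lemma ax_sound (sym : Bool) : Ax sym ⊆ ValidOn (Cl sym) := by
  intro φ hφ M hM w
  have hrefl := hM.1
  have haxT : M.Sat axT w := by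
    intro h
    exact h w (hrefl w)
  rcases sym with _ | _
  · replace hφ : φ ∈ ({axT} : Set Formula) := hφ
    rw [hφ]; exact haxT
  · replace hφ : φ ∈ insert axT ({axB} : Set Formula) := hφ
    rcases hφ with rfl | rfl
    · exact haxT
    · -- axB : p → □◇p
      intro hp x hwx
      rw [sat_dia]
      exact ⟨w, hM.2 rfl hwx, hp⟩

lemma lg_sound (sym : Bool) : Lg sym ⊆ ValidOn (Cl sym) := by
  intro φ hφ
  exact hφ _ ⟨validOn_normal sym, ax_sound sym⟩

lemma lg_normal (sym : Bool) : IsNormal (Lg sym) := normalExt_normal _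

lemma axT_mem (sym : Bool) : axT ∈ Lg sym := by
  apply subset_normalExt
  rcases sym with _ | _
  · show axT ∈ ({axT} : Set Formula); exact rfl
  · exact Set.mem_insert _ _

lemma axB_mem : axB ∈ Lg true := by
  apply subset_normalExt
  show axB ∈ insert axT {axB}
  exact Set.mem_insert_of_mem _ rfl

lemma axT_inst (sym : Bool) (φ : Formula) : φ.box.imp φ ∈ Lg sym := by
  have := (lg_normal sym).subst_mem _ (axT_mem sym) (fun _ => φ)
  simpa [Formula.subst, axT] using this

lemma axB_inst (φ : Formula) : φ.imp φ.dia.box ∈ Lg true := by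
  have := (lg_normal true).subst_mem _ axB_mem (fun _ => φ)
  simpa [Formula.subst, axB, Formula.dia, Formula.neg] using this

/-- Canonical model is in the right class. -/
lemma canModel_mem (sym : Bool) (h : ∃ Δ : Set Formula, MCS (Lg sym) Δ) :
    canModel (L := Lg sym) h ∈ Cl sym := by
  constructor
  · intro Δ χ hχ
    exact mcs_mp (lg_normal sym) Δ.2
      (mcs_mem_of_prov (lg_normal sym) Δ.2 (axT_inst sym χ)) hχ
  · rintro rfl
    intro Δ Θ hrel χ hχ
    by_contra hχΔ
    have hL := lg_normal true
    have h1 : χ.neg ∈ Δ.1 := (mcs_neg_iff hL Δ.2).2 hχΔ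
    have h2 : χ.neg.dia.box ∈ Δ.1 :=
      mcs_mp hL Δ.2 (mcs_mem_of_prov hL Δ.2 (axB_inst χ.neg)) h1
    have h3 : χ.neg.dia ∈ Θ.1 := hrel _ h2
    -- χ.neg.dia = ¬□(¬¬χ) ; but □χ ∈ Θ gives □(¬¬χ) ∈ Θ
    have h4 : χ.imp χ.neg.neg ∈ Lg true := by
      apply mem_of_taut hL
      intro v h0 himp
      rw [Formula.neg, Formula.neg]
      simp only [himp]
      intro h1 h2
      exact absurd (h2 h1) h0
    have h5 : χ.neg.neg.box ∈ Θ.1 :=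
      mcs_mp hL Θ.2 (mcs_mem_of_prov hL Θ.2 (box_mono hL h4)) hχ
    have h6 : χ.neg.neg.box.neg ∈ Θ.1 := h3
    exact (mcs_neg_iff hL Θ.2).1 h6 h5

/-- Completeness. -/
lemma lg_complete (sym : Bool) {φ : Formula}
    (h : ∀ M ∈ Cl sym, ∀ w : M.W, M.Sat φ w) : φ ∈ Lg sym := by
  by_contra hφ
  have hL := lg_normal sym
  have hcon : Con (Lg sym) {φ.neg} := by
    rintro ⟨l, hmem, hl⟩
    apply hφ
    have t : (lImp l Formula.bot).imp φ ∈ Lg sym := by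
      apply mem_of_taut hL
      intro v h0 himp
      rw [himp, v_lImp v himp]
      intro h1
      by_cases hv : v φ = true
      · exact hv
      · exfalso
        apply h0
        apply h1
        intro a ha
        have : a = φ.neg := hmem a ha
        subst this
        rw [Formula.neg, himp]
        intro hφ'
        exact absurd hφ' hv
    exact hL.mp _ _ t hl
  obtain ⟨Δ, hΔ, hsub⟩ := lindenbaum hcon
  have hMCS : ∃ Δ : Set Formula, MCS (Lg sym) Δ := ⟨Δ, hΔ⟩
  have hval := h (canModel hMCS) (canModel_mem sym hMCS) ⟨Δ, hΔ⟩
  rw [truth_lemma hL hMCS φ ⟨Δ, hΔ⟩] at hval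
  exact (mcs_neg_iff hL hΔ).1 (hsub rfl) hval

end ULKT
namespace ULKT
open Formula
attribute [local instance] Classical.propDecidable

def orF (a b : Formula) : Formula := a.neg.imp b

def disjList : List Formula → Formula
  | [] => Formula.bot
  | a :: l => orF a (disjList l)

lemma sat_orF {M : KripkeModel} {a b : Formula} {w : M.W} :
    M.Sat (orF a b) w ↔ M.Sat a w ∨ M.Sat b w := by
  show (M.Sat a.neg w → M.Sat b w) ↔ _
  rw [sat_neg]
  by_cases h : M.Sat a w <;> simp [h]

lemma sat_conjList {M : KripkeModel} {w : M.W} :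
    ∀ l : List Formula, M.Sat (conjList l) w ↔ ∀ a ∈ l, M.Sat a w := by
  intro l
  induction l with
  | nil => simpa [conjList] using sat_top
  | cons a l ih =>
      show M.Sat (a.and (conjList l)) w ↔ _
      rw [sat_and, ih]
      simp

lemma sat_disjList {M : KripkeModel} {w : M.W} :
    ∀ l : List Formula, M.Sat (disjList l) w ↔ ∃ a ∈ l, M.Sat a w := by
  intro l
  induction l with
  | nil => show False ↔ _; simp [disjList]
  | cons a l ih =>
      show M.Sat (orF a (disjList l)) w ↔ _
      rw [sat_orF, ih]
      simp

lemma vsgn_orF (a b : Formula) (sb : Bool) : (orF a b).vsgn sb = a.vsgn sb ∪ b.vsgn sb := by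
  show (a.neg.imp b).vsgn sb = _
  cases sb <;> simp [Formula.vsgn, vsgn_neg]

lemma vsgn_conjList_subset {S : Finset ℕ} {sb : Bool} :
    ∀ {l : List Formula}, (∀ a ∈ l, a.vsgn sb ⊆ S) → (conjList l).vsgn sb ⊆ S := by
  intro l
  induction l with
  | nil => intro _; show (Formula.top).vsgn sb ⊆ S; rw [vsgn_top]; simp
  | cons a l ih =>
      intro h
      show (a.and (conjList l)).vsgn sb ⊆ S
      rw [vsgn_and]
      exact Finset.union_subset (h a List.mem_cons_self)
        (ih fun b hb => h b (List.mem_cons_of_mem _ hb))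

lemma vsgn_disjList_subset {S : Finset ℕ} {sb : Bool} :
    ∀ {l : List Formula}, (∀ a ∈ l, a.vsgn sb ⊆ S) → (disjList l).vsgn sb ⊆ S := by
  intro l
  induction l with
  | nil => intro _; show (Formula.bot).vsgn sb ⊆ S; cases sb <;> simp [Formula.vsgn]
  | cons a l ih =>
      intro h
      show (orF a (disjList l)).vsgn sb ⊆ S
      rw [vsgn_orF]
      exact Finset.union_subset (h a List.mem_cons_self)
        (ih fun b hb => h b (List.mem_cons_of_mem _ hb))

lemma depth_conjList_le {n : ℕ} :
    ∀ {l : List Formula}, (∀ a ∈ l, a.depth ≤ n) → (conjList l).depth ≤ n := by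
  intro l
  induction l with
  | nil => intro _; show (Formula.top).depth ≤ n; simp [Formula.top, depth_neg, Formula.depth]
  | cons a l ih =>
      intro h
      show (a.and (conjList l)).depth ≤ n
      rw [depth_and]
      exact max_le (h a List.mem_cons_self) (ih fun b hb => h b (List.mem_cons_of_mem _ hb))

lemma depth_disjList_le {n : ℕ} :
    ∀ {l : List Formula}, (∀ a ∈ l, a.depth ≤ n) → (disjList l).depth ≤ n := by
  intro l
  induction l with
  | nil => intro _; show (Formula.bot).depth ≤ n; simp [Formula.depth]
  | cons a l ih =>
      intro h
      show (orF a (disjList l)).depth ≤ n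
      show max (a.neg.depth) (disjList l).depth ≤ n
      rw [depth_neg]
      exact max_le (h a List.mem_cons_self) (ih fun b hb => h b (List.mem_cons_of_mem _ hb))

/-! ### Characteristic formulas -/

/-- ⋀_{p∈A} p ∧ ⋀_{q∈B} ¬q -/
noncomputable def fml0 (A B : Finset ℕ) : Formula :=
  (conjList (A.toList.map Formula.var)).and
    (conjList (B.toList.map fun q => (Formula.var q).neg))

noncomputable def tyStep (A B : Finset ℕ) (S : Finset Formula) : Formula :=
  (fml0 A B).and ((conjList (S.toList.map Formula.dia)).and (disjList S.toList).box)

noncomputable def TyF (P Q : Finset ℕ) : ℕ → Finset Formula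
  | 0 => (P.powerset ×ˢ Q.powerset).image fun AB => fml0 AB.1 AB.2
  | n + 1 => ((P.powerset ×ˢ Q.powerset) ×ˢ (TyF P Q n).powerset).image
      fun x => tyStep x.1.1 x.1.2 x.2

noncomputable def ty (M : KripkeModel) (P Q : Finset ℕ) : ℕ → M.W → Formula
  | 0, w => fml0 (P.filter fun p => M.val w p) (Q.filter fun q => ¬ M.val w q)
  | n + 1, w => tyStep (P.filter fun p => M.val w p) (Q.filter fun q => ¬ M.val w q)
      ((TyF P Q n).filter fun t => ∃ x, M.rel w x ∧ ty M P Q n x = t)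

lemma ty_mem_TyF (M : KripkeModel) (P Q : Finset ℕ) (n : ℕ) (w : M.W) :
    ty M P Q n w ∈ TyF P Q n := by
  cases n with
  | zero =>
      apply Finset.mem_image.2
      exact ⟨(P.filter _, Q.filter _), Finset.mem_product.2
        ⟨Finset.mem_powerset.2 (Finset.filter_subset _ _),
         Finset.mem_powerset.2 (Finset.filter_subset _ _)⟩, rfl⟩
  | succ n =>
      apply Finset.mem_image.2
      refine ⟨((P.filter _, Q.filter _), (TyF P Q n).filter _), Finset.mem_product.2
        ⟨Finset.mem_product.2 ⟨Finset.mem_powerset.2 (Finset.filter_subset _ _),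
          Finset.mem_powerset.2 (Finset.filter_subset _ _)⟩,
          Finset.mem_powerset.2 (Finset.filter_subset _ _)⟩, rfl⟩

lemma fml0_spec (A B : Finset ℕ) :
    (fml0 A B).vsgn true ⊆ A ∧ (fml0 A B).vsgn false ⊆ B ∧ (fml0 A B).depth = 0 := by
  refine ⟨?_, ?_, ?_⟩
  · rw [fml0, vsgn_and]
    apply Finset.union_subset
    · apply vsgn_conjList_subset
      intro a ha
      obtain ⟨p, hp, rfl⟩ := List.mem_map.1 ha
      simpa [Formula.vsgn] using Finset.mem_toList.1 hp
    · apply vsgn_conjList_subset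
      intro a ha
      obtain ⟨q, hq, rfl⟩ := List.mem_map.1 ha
      rw [vsgn_neg]
      simp [Formula.vsgn]
  · rw [fml0, vsgn_and]
    apply Finset.union_subset
    · apply vsgn_conjList_subset
      intro a ha
      obtain ⟨p, hp, rfl⟩ := List.mem_map.1 ha
      simp [Formula.vsgn]
    · apply vsgn_conjList_subset
      intro a ha
      obtain ⟨q, hq, rfl⟩ := List.mem_map.1 ha
      rw [vsgn_neg]
      simpa [Formula.vsgn] using Finset.mem_toList.1 hq
  · rw [fml0, depth_and]
    rw [Nat.max_eq_zero_iff]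
    constructor <;>
    · apply Nat.le_zero.1
      apply depth_conjList_le
      intro a ha
      obtain ⟨p, hp, rfl⟩ := List.mem_map.1 ha
      simp [Formula.depth, depth_neg]

lemma TyF_spec (P Q : Finset ℕ) :
    ∀ (n : ℕ), ∀ t ∈ TyF P Q n, t.vsgn true ⊆ P ∧ t.vsgn false ⊆ Q ∧ t.depth ≤ n := by
  intro n
  induction n with
  | zero =>
      intro t ht
      obtain ⟨⟨A, B⟩, hAB, rfl⟩ := Finset.mem_image.1 ht
      obtain ⟨hA, hB⟩ := Finset.mem_product.1 hAB
      obtain ⟨h1, h2, h3⟩ := fml0_spec A B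
      exact ⟨h1.trans (Finset.mem_powerset.1 hA), h2.trans (Finset.mem_powerset.1 hB), le_of_eq h3⟩
  | succ n ih =>
      intro t ht
      obtain ⟨⟨⟨A, B⟩, S⟩, hx, rfl⟩ := Finset.mem_image.1 ht
      obtain ⟨hAB, hS⟩ := Finset.mem_product.1 hx
      obtain ⟨hA, hB⟩ := Finset.mem_product.1 hAB
      rw [Finset.mem_powerset] at hA hB hS
      obtain ⟨h1, h2, h3⟩ := fml0_spec A B
      have hSs : ∀ s ∈ S.toList, s.vsgn true ⊆ P ∧ s.vsgn false ⊆ Q ∧ s.depth ≤ n :=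
        fun s hs => ih s (hS (Finset.mem_toList.1 hs))
      refine ⟨?_, ?_, ?_⟩
      · rw [tyStep, vsgn_and, vsgn_and]
        apply Finset.union_subset (h1.trans hA)
        apply Finset.union_subset
        · apply vsgn_conjList_subset
          intro a ha
          obtain ⟨s, hs, rfl⟩ := List.mem_map.1 ha
          rw [vsgn_dia]
          exact (hSs s hs).1
        · show (disjList S.toList).vsgn true ⊆ P
          exact vsgn_disjList_subset fun s hs => (hSs s hs).1
      · rw [tyStep, vsgn_and, vsgn_and]
        apply Finset.union_subset (h2.trans hB)
        apply Finset.union_subset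
        · apply vsgn_conjList_subset
          intro a ha
          obtain ⟨s, hs, rfl⟩ := List.mem_map.1 ha
          rw [vsgn_dia]
          exact (hSs s hs).2.1
        · show (disjList S.toList).vsgn false ⊆ Q
          exact vsgn_disjList_subset fun s hs => (hSs s hs).2.1
      · rw [tyStep, depth_and, depth_and]
        rw [h3]
        apply max_le (Nat.zero_le _)
        apply max_le
        · apply depth_conjList_le
          intro a ha
          obtain ⟨s, hs, rfl⟩ := List.mem_map.1 ha
          rw [depth_dia]
          exact Nat.succ_le_succ (hSs s hs).2.2
        · show (disjList S.toList).depth + 1 ≤ n + 1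
          exact Nat.succ_le_succ (depth_disjList_le fun s hs => (hSs s hs).2.2)

lemma sat_fml0 {M : KripkeModel} {A B : Finset ℕ} {w : M.W} :
    M.Sat (fml0 A B) w ↔ ((∀ p ∈ A, M.val w p) ∧ ∀ q ∈ B, ¬ M.val w q) := by
  rw [fml0, sat_and, sat_conjList, sat_conjList]
  constructor
  · rintro ⟨h1, h2⟩
    constructor
    · intro p hp
      exact h1 _ (List.mem_map.2 ⟨p, Finset.mem_toList.2 hp, rfl⟩)
    · intro q hq
      have := h2 _ (List.mem_map.2 ⟨q, Finset.mem_toList.2 hq, rfl⟩)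
      rw [sat_neg] at this
      exact this
  · rintro ⟨h1, h2⟩
    constructor
    · intro a ha
      obtain ⟨p, hp, rfl⟩ := List.mem_map.1 ha
      exact h1 p (Finset.mem_toList.1 hp)
    · intro a ha
      obtain ⟨q, hq, rfl⟩ := List.mem_map.1 ha
      rw [sat_neg]
      exact h2 q (Finset.mem_toList.1 hq)

lemma sat_ty (M : KripkeModel) (P Q : Finset ℕ) :
    ∀ (n : ℕ) (w : M.W), M.Sat (ty M P Q n w) w := by
  intro n
  induction n with
  | zero =>
      intro w
      rw [ty, sat_fml0]
      constructor
      · intro p hp; exact (Finset.mem_filter.1 hp).2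
      · intro q hq; exact (Finset.mem_filter.1 hq).2
  | succ n ih =>
      intro w
      rw [ty, tyStep, sat_and, sat_and]
      refine ⟨?_, ?_, ?_⟩
      · rw [sat_fml0]
        constructor
        · intro p hp; exact (Finset.mem_filter.1 hp).2
        · intro q hq; exact (Finset.mem_filter.1 hq).2
      · rw [sat_conjList]
        intro a ha
        obtain ⟨t, ht, rfl⟩ := List.mem_map.1 ha
        obtain ⟨_, x, hx, rfl⟩ := Finset.mem_filter.1 (Finset.mem_toList.1 ht)
        rw [sat_dia]
        exact ⟨x, hx, ih x⟩
      · intro x hx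
        rw [sat_disjList]
        refine ⟨ty M P Q n x, ?_, ih x⟩
        apply Finset.mem_toList.2
        exact Finset.mem_filter.2 ⟨ty_mem_TyF M P Q n x, x, hx, rfl⟩

/-! ### Extraction from goodness -/

section Good
variable {M N : KripkeModel} {P Q : Finset ℕ}

lemma good_atoms {k : ℕ} {x : M.W} {y : N.W} (h : N.Sat (ty M P Q k x) y) :
    (∀ p ∈ P, M.val x p → N.val y p) ∧ (∀ q ∈ Q, ¬ M.val x q → ¬ N.val y q) := by
  have h0 : N.Sat (fml0 (P.filter fun p => M.val x p) (Q.filter fun q => ¬ M.val x q)) y := by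
    cases k with
    | zero => rw [ty] at h; exact h
    | succ k => rw [ty, tyStep, sat_and] at h; exact h.1
  rw [sat_fml0] at h0
  constructor
  · intro p hp hv
    exact h0.1 p (Finset.mem_filter.2 ⟨hp, hv⟩)
  · intro q hq hv hy
    exact h0.2 q (Finset.mem_filter.2 ⟨hq, hv⟩) hy

lemma good_forth {k : ℕ} {x : M.W} {y : N.W} (h : N.Sat (ty M P Q (k + 1) x) y) :
    ∀ x', M.rel x x' → ∃ y', N.rel y y' ∧ N.Sat (ty M P Q k x') y' := by
  intro x' hx'
  rw [ty, tyStep, sat_and, sat_and] at h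
  have := (sat_conjList _).1 h.2.1 ((ty M P Q k x').dia) (List.mem_map.2
    ⟨ty M P Q k x', Finset.mem_toList.2 (Finset.mem_filter.2
      ⟨ty_mem_TyF M P Q k x', x', hx', rfl⟩), rfl⟩)
  rw [sat_dia] at this
  exact this

lemma good_back {k : ℕ} {x : M.W} {y : N.W} (h : N.Sat (ty M P Q (k + 1) x) y) :
    ∀ y', N.rel y y' → ∃ x', M.rel x x' ∧ N.Sat (ty M P Q k x') y' := by
  intro y' hy'
  rw [ty, tyStep, sat_and, sat_and] at h
  have := h.2.2 y' hy'
  rw [sat_disjList] at this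
  obtain ⟨t, ht, hsat⟩ := this
  obtain ⟨_, x', hx', rfl⟩ := Finset.mem_filter.1 (Finset.mem_toList.1 ht)
  exact ⟨x', hx', hsat⟩

end Good
end ULKT
namespace ULKT
open Formula

lemma vpos_var (p : ℕ) : (Formula.var p).vpos = {p} := rfl
lemma vneg_var (p : ℕ) : (Formula.var p).vneg = ∅ := rfl
lemma vpos_imp (a b : Formula) : (a.imp b).vpos = a.vneg ∪ b.vpos := rfl
lemma vneg_imp (a b : Formula) : (a.imp b).vneg = a.vpos ∪ b.vneg := rfl
lemma vpos_box (a : Formula) : a.box.vpos = a.vpos := rfl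
lemma vneg_box (a : Formula) : a.box.vneg = a.vneg := rfl

section Star

variable (sym : Bool) (M N : KripkeModel) (PP QQ Vp Vn Wp Wn : Finset ℕ)

/-- `Good (x, y, k)` iff `y` satisfies the `k`-characteristic formula of `x`. -/
def Good (t : M.W × N.W × ℕ) : Prop :=
  N.Sat (ty M PP QQ t.2.2 t.1) t.2.1

/-- Worlds of the amalgamated model. -/
def sW : Type := {t : M.W × N.W × ℕ // Good M N PP QQ t} ⊕ N.W

def projY : sW M N PP QQ → N.W
  | .inl s => s.1.2.1
  | .inr y => y

def auxRel : sW M N PP QQ → sW M N PP QQ → Prop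
  | .inl s, .inl t =>
      (s.1.2.2 = t.1.2.2 + 1 ∧ M.rel s.1.1 t.1.1) ∨
      (t.1.2.2 = s.1.2.2 ∧ t.1.1 = s.1.1) ∨
      (sym = true ∧ t.1.2.2 = s.1.2.2 + 1 ∧ M.rel t.1.1 s.1.1)
  | .inl s, .inr _ => s.1.2.2 = 0
  | .inr _, .inl t => sym = true ∧ t.1.2.2 = 0
  | .inr _, .inr _ => True

def sRel (s t : sW M N PP QQ) : Prop :=
  N.rel (projY M N PP QQ s) (projY M N PP QQ t) ∧ auxRel sym M N PP QQ s t

open Classical in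
noncomputable def sVal : sW M N PP QQ → ℕ → Prop
  | .inl s, p =>
      if p ∈ Vp then
        (if p ∈ Vn then M.val s.1.1 p
         else (M.val s.1.1 p ∨ (p ∈ Wn ∧ N.val s.1.2.1 p)))
      else if p ∈ Vn then (M.val s.1.1 p ∧ (p ∈ Wp → N.val s.1.2.1 p))
      else N.val s.1.2.1 p
  | .inr y, p => N.val y p

noncomputable def sModel (s0 : sW M N PP QQ) : KripkeModel where
  W := sW M N PP QQ
  nonempty := ⟨s0⟩
  rel := sRel sym M N PP QQ
  val := sVal M N PP QQ Vp Vn Wp Wn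

variable {M N}
variable (hNrefl : Reflexive N.rel) (hNsym : sym = true → Symmetric N.rel)
variable (hMrefl : Reflexive M.rel) (hMsym : sym = true → Symmetric M.rel)
variable (s0 : sW M N PP QQ)

include hNrefl hNsym in
lemma sModel_mem :
    sModel sym M N PP QQ Vp Vn Wp Wn s0 ∈ Cl sym := by
  constructor
  · intro s
    refine ⟨hNrefl _, ?_⟩
    rcases s with s | y
    · exact Or.inr (Or.inl ⟨rfl, rfl⟩)
    · trivial
  · intro hs s t hst
    obtain ⟨hn, ha⟩ := hst
    refine ⟨hNsym hs hn, ?_⟩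
    rcases s with s | y <;> rcases t with t | y'
    · rcases ha with ⟨h1, h2⟩ | ⟨h1, h2⟩ | ⟨_, h1, h2⟩
      · exact Or.inr (Or.inr ⟨hs, h1, h2⟩)
      · exact Or.inr (Or.inl ⟨h1.symm, h2.symm⟩)
      · exact Or.inl ⟨h1, h2⟩
    · exact ⟨hs, ha⟩
    · exact ha.2
    · trivial

include hMrefl hMsym in
/-- Lemma A : transfer of `(Vp, Vn)`-formulas of small depth between `x` and `(x,y,k)`. -/
lemma lemA :
    ∀ χ : Formula, ∀ (k : ℕ) (x : M.W) (y : N.W) (hg : Good M N PP QQ (x, y, k)),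
      χ.depth ≤ k →
      ((χ.vpos ⊆ Vp → χ.vneg ⊆ Vn → M.Sat χ x →
        (sModel sym M N PP QQ Vp Vn Wp Wn s0).Sat χ (Sum.inl ⟨(x, y, k), hg⟩)) ∧
       (χ.vpos ⊆ Vn → χ.vneg ⊆ Vp →
        (sModel sym M N PP QQ Vp Vn Wp Wn s0).Sat χ (Sum.inl ⟨(x, y, k), hg⟩) → M.Sat χ x)) := by
  intro χ
  induction χ with
  | var p =>
      intro k x y hg _
      constructor
      · intro h1 _ hx
        have hp : p ∈ Vp := h1 (by rw [vpos_var]; exact Finset.mem_singleton_self p)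
        show sVal M N PP QQ Vp Vn Wp Wn (Sum.inl ⟨(x, y, k), hg⟩) p
        by_cases hn : p ∈ Vn
        · simpa [sVal, hp, hn, KripkeModel.Sat] using hx
        · simp only [sVal, if_pos hp, if_neg hn]
          exact Or.inl hx
      · intro h1 _ hx
        have hp : p ∈ Vn := h1 (by rw [vpos_var]; exact Finset.mem_singleton_self p)
        replace hx : sVal M N PP QQ Vp Vn Wp Wn (Sum.inl ⟨(x, y, k), hg⟩) p := hx
        by_cases hv : p ∈ Vp
        · simpa [sVal, hp, hv, KripkeModel.Sat] using hx
        · simp only [sVal, if_neg hv, if_pos hp] at hx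
          exact hx.1
  | bot =>
      intro k x y hg _
      exact ⟨fun _ _ h => h.elim, fun _ _ h => h.elim⟩
  | imp a b iha ihb =>
      intro k x y hg hk
      have hka : a.depth ≤ k := le_trans (le_max_left _ _) hk
      have hkb : b.depth ≤ k := le_trans (le_max_right _ _) hk
      constructor
      · intro h1 h2 hx hsa
        rw [vpos_imp] at h1; rw [vneg_imp] at h2
        have ha := ((iha k x y hg hka).2
          (Finset.union_subset_left h2) (Finset.union_subset_left h1)) hsa
        exact ((ihb k x y hg hkb).1
          (Finset.union_subset_right h1) (Finset.union_subset_right h2)) (hx ha)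
      · intro h1 h2 hx hsa
        rw [vpos_imp] at h1; rw [vneg_imp] at h2
        have ha := ((iha k x y hg hka).1
          (Finset.union_subset_left h2) (Finset.union_subset_left h1)) hsa
        exact ((ihb k x y hg hkb).2
          (Finset.union_subset_right h1) (Finset.union_subset_right h2)) (hx ha)
  | box a iha =>
      intro k x y hg hk
      have hk' : a.depth + 1 ≤ k := hk
      constructor
      · intro h1 h2 hx t hst
        obtain ⟨hn, haux⟩ := hst
        rcases t with ⟨⟨x', y', k'⟩, hg'⟩ | y'
        · rcases haux with ⟨hkk, hrel⟩ | ⟨hkk, hxx⟩ | ⟨hsy, hkk, hrel⟩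
          · simp only at hkk hrel
            exact ((iha k' x' y' hg' (by omega)).1
              (by rwa [vpos_box] at h1) (by rwa [vneg_box] at h2)) (hx x' hrel)
          · simp only at hkk hxx
            subst hkk
            subst hxx
            exact ((iha k' x' y' hg' (by omega)).1
              (by rwa [vpos_box] at h1) (by rwa [vneg_box] at h2)) (hx x' (hMrefl x'))
          · simp only at hkk hrel
            exact ((iha k' x' y' hg' (by omega)).1
              (by rwa [vpos_box] at h1) (by rwa [vneg_box] at h2)) (hx x' (hMsym hsy hrel))
        · exfalso
          have hk0 : k = 0 := haux
          omega
      · intro h1 h2 hx x' hrel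
        obtain ⟨k'', rfl⟩ : ∃ k'', k = k'' + 1 := ⟨k - 1, by omega⟩
        obtain ⟨y', hy', hg'⟩ := good_forth hg x' hrel
        have hedge : sRel sym M N PP QQ (Sum.inl ⟨(x, y, k'' + 1), hg⟩)
            (Sum.inl ⟨(x', y', k''), hg'⟩) := ⟨hy', Or.inl ⟨rfl, hrel⟩⟩
        exact ((iha k'' x' y' hg' (by omega)).2
          (by rwa [vpos_box] at h1) (by rwa [vneg_box] at h2)) (hx _ hedge)

variable (hWpPP : ∀ p ∈ Wp, p ∈ Vp → p ∈ PP)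
variable (hWnQQ : ∀ p ∈ Wn, p ∈ Vn → p ∈ QQ)

include hWpPP hWnQQ in
/-- Lemma B : transfer of `(Wp, Wn)`-formulas between the amalgam and `N`. -/
lemma lemB :
    ∀ χ : Formula, ∀ s : sW M N PP QQ,
      ((χ.vpos ⊆ Wp → χ.vneg ⊆ Wn →
        (sModel sym M N PP QQ Vp Vn Wp Wn s0).Sat χ s → N.Sat χ (projY M N PP QQ s)) ∧
       (χ.vpos ⊆ Wn → χ.vneg ⊆ Wp →
        N.Sat χ (projY M N PP QQ s) → (sModel sym M N PP QQ Vp Vn Wp Wn s0).Sat χ s)) := by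
  intro χ
  induction χ with
  | var p =>
      intro s
      constructor
      · intro h1 _ hx
        have hp : p ∈ Wp := h1 (Finset.mem_singleton_self p)
        rcases s with ⟨⟨x, y, k⟩, hg⟩ | y
        · replace hx : sVal M N PP QQ Vp Vn Wp Wn (Sum.inl ⟨(x, y, k), hg⟩) p := hx
          show N.val y p
          have hga := good_atoms hg
          by_cases hv : p ∈ Vp
          · by_cases hn : p ∈ Vn
            · simp only [sVal, if_pos hv, if_pos hn] at hx
              exact hga.1 p (hWpPP p hp hv) hx
            · simp only [sVal, if_pos hv, if_neg hn] at hx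
              rcases hx with hx | hx
              · exact hga.1 p (hWpPP p hp hv) hx
              · exact hx.2
          · by_cases hn : p ∈ Vn
            · simp only [sVal, if_neg hv, if_pos hn] at hx
              exact hx.2 hp
            · simpa [sVal, hv, hn] using hx
        · exact hx
      · intro h1 _ hx
        have hp : p ∈ Wn := h1 (Finset.mem_singleton_self p)
        rcases s with ⟨⟨x, y, k⟩, hg⟩ | y
        · replace hx : N.val y p := hx
          show sVal M N PP QQ Vp Vn Wp Wn (Sum.inl ⟨(x, y, k), hg⟩) p
          have hga := good_atoms hg
          by_cases hv : p ∈ Vp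
          · by_cases hn : p ∈ Vn
            · simp only [sVal, if_pos hv, if_pos hn]
              by_contra hmx
              exact hga.2 p (hWnQQ p hp hn) hmx hx
            · simp only [sVal, if_pos hv, if_neg hn]
              exact Or.inr ⟨hp, hx⟩
          · by_cases hn : p ∈ Vn
            · simp only [sVal, if_neg hv, if_pos hn]
              constructor
              · by_contra hmx
                exact hga.2 p (hWnQQ p hp hn) hmx hx
              · intro _; exact hx
            · simpa [sVal, hv, hn] using hx
        · exact hx
  | bot =>
      intro s
      exact ⟨fun _ _ h => h.elim, fun _ _ h => h.elim⟩
  | imp a b iha ihb =>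
      intro s
      constructor
      · intro h1 h2 hx hsa
        rw [vpos_imp] at h1; rw [vneg_imp] at h2
        have ha := (iha s).2 (Finset.union_subset_left h2) (Finset.union_subset_left h1) hsa
        exact (ihb s).1 (Finset.union_subset_right h1) (Finset.union_subset_right h2) (hx ha)
      · intro h1 h2 hx hsa
        rw [vpos_imp] at h1; rw [vneg_imp] at h2
        have ha := (iha s).1 (Finset.union_subset_left h2) (Finset.union_subset_left h1) hsa
        exact (ihb s).2 (Finset.union_subset_right h1) (Finset.union_subset_right h2) (hx ha)
  | box a iha =>
      intro s
      constructor
      · intro h1 h2 hx y' hy'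
        rw [vpos_box] at h1; rw [vneg_box] at h2
        rcases s with ⟨⟨x, y, k⟩, hg⟩ | y
        · cases k with
          | zero =>
              have hedge : sRel sym M N PP QQ (Sum.inl ⟨(x, y, 0), hg⟩) (Sum.inr y') :=
                ⟨hy', rfl⟩
              exact (iha (Sum.inr y')).1 h1 h2 (hx _ hedge)
          | succ k'' =>
              obtain ⟨x', hx', hg'⟩ := good_back hg y' hy'
              have hedge : sRel sym M N PP QQ (Sum.inl ⟨(x, y, k'' + 1), hg⟩)
                  (Sum.inl ⟨(x', y', k''), hg'⟩) := ⟨hy', Or.inl ⟨rfl, hx'⟩⟩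
              exact (iha (Sum.inl ⟨(x', y', k''), hg'⟩)).1 h1 h2 (hx _ hedge)
        · have hedge : sRel sym M N PP QQ (Sum.inr y) (Sum.inr y') := ⟨hy', trivial⟩
          exact (iha (Sum.inr y')).1 h1 h2 (hx _ hedge)
      · intro h1 h2 hx t hst
        rw [vpos_box] at h1; rw [vneg_box] at h2
        exact (iha t).2 h1 h2 (hx _ hst.1)

end Star
end ULKT
namespace ULKT
open Formula
attribute [local instance] Classical.propDecidable

lemma ulip_lg (sym : Bool) :
    ∀ (φ : Formula) (P Q : Finset ℕ), ∃ θ : Formula,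
      IsULInterpolant (Lg sym) φ P Q θ ∧ θ.depth ≤ φ.depth := by
  intro φ P Q
  set n := φ.depth with hn
  set PP := φ.vpos \ P with hPP
  set QQ := φ.vneg \ Q with hQQ
  set S : Finset Formula := (TyF PP QQ n).filter
    (fun t => ∃ M : KripkeModel, M ∈ Cl sym ∧ ∃ w : M.W, M.Sat φ w ∧ ty M PP QQ n w = t)
    with hS
  refine ⟨disjList S.toList, ⟨?_, ?_, ?_, ?_⟩, ?_⟩
  · -- positive variables
    apply vsgn_disjList_subset
    intro t ht
    exact ((TyF_spec PP QQ n t (Finset.mem_of_mem_filter t (Finset.mem_toList.1 ht))).1)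
  · -- negative variables
    apply vsgn_disjList_subset
    intro t ht
    exact ((TyF_spec PP QQ n t (Finset.mem_of_mem_filter t (Finset.mem_toList.1 ht))).2.1)
  · -- φ → θ
    apply lg_complete
    intro M hM w hφw
    rw [sat_disjList]
    refine ⟨ty M PP QQ n w, ?_, sat_ty M PP QQ n w⟩
    exact Finset.mem_toList.2 (Finset.mem_filter.2
      ⟨ty_mem_TyF M PP QQ n w, M, hM, w, hφw, rfl⟩)
  · -- minimality
    intro ψ hPψ hQψ hφψ
    apply lg_complete
    intro N hN v hθv
    rw [sat_disjList] at hθv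
    obtain ⟨t, ht, hsat⟩ := hθv
    obtain ⟨_, M, hM, w, hφw, rfl⟩ := Finset.mem_filter.1 (Finset.mem_toList.1 ht)
    have hg : Good M N PP QQ (w, v, n) := hsat
    have hWpPP : ∀ p ∈ ψ.vpos, p ∈ φ.vpos → p ∈ PP := by
      intro p hp hv
      rw [hPP, Finset.mem_sdiff]
      refine ⟨hv, fun hmem => ?_⟩
      have : p ∈ ψ.vpos ∩ P := Finset.mem_inter.2 ⟨hp, hmem⟩
      rw [hPψ] at this
      exact absurd this (Finset.notMem_empty p)
    have hWnQQ : ∀ p ∈ ψ.vneg, p ∈ φ.vneg → p ∈ QQ := by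
      intro p hp hv
      rw [hQQ, Finset.mem_sdiff]
      refine ⟨hv, fun hmem => ?_⟩
      have : p ∈ ψ.vneg ∩ Q := Finset.mem_inter.2 ⟨hp, hmem⟩
      rw [hQψ] at this
      exact absurd this (Finset.notMem_empty p)
    set s0 : sW M N PP QQ := Sum.inl ⟨(w, v, n), hg⟩ with hs0
    have hstar_mem : sModel sym M N PP QQ φ.vpos φ.vneg ψ.vpos ψ.vneg s0 ∈ Cl sym :=
      sModel_mem sym PP QQ φ.vpos φ.vneg ψ.vpos ψ.vneg hN.1 hN.2 s0
    have hA : (sModel sym M N PP QQ φ.vpos φ.vneg ψ.vpos ψ.vneg s0).Sat φ s0 :=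
      (lemA sym PP QQ φ.vpos φ.vneg ψ.vpos ψ.vneg hM.1 hM.2 s0 φ n w v hg
        (le_refl _)).1 (Finset.Subset.refl _) (Finset.Subset.refl _) hφw
    have hψs0 : (sModel sym M N PP QQ φ.vpos φ.vneg ψ.vpos ψ.vneg s0).Sat ψ s0 :=
      lg_sound sym hφψ _ hstar_mem s0 hA
    have hB := (lemB sym PP QQ φ.vpos φ.vneg ψ.vpos ψ.vneg s0 hWpPP hWnQQ ψ s0).1
      (Finset.Subset.refl _) (Finset.Subset.refl _) hψs0
    exact hB
  · -- depth
    apply depth_disjList_le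
    intro t ht
    exact (TyF_spec PP QQ n t (Finset.mem_of_mem_filter t (Finset.mem_toList.1 ht))).2.2



end ULKT
/-- KT and KTB enjoy ULIP, with interpolants of depth at most d(φ). -/
theorem ulip_KT_KTB :
    (ULIP TheoryKT ∧ ∀ (φ : Formula) (P Q : Finset ℕ), ∃ θ : Formula,
        IsULInterpolant TheoryKT φ P Q θ ∧ θ.depth ≤ φ.depth) ∧
    (ULIP TheoryKTB ∧ ∀ (φ : Formula) (P Q : Finset ℕ), ∃ θ : Formula,
        IsULInterpolant TheoryKTB φ P Q θ ∧ θ.depth ≤ φ.depth) := by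
  have hKT : TheoryKT = ULKT.Lg false := rfl
  have hKTB : TheoryKTB = ULKT.Lg true := rfl
  refine ⟨⟨?_, ?_⟩, ?_, ?_⟩
  · intro φ P Q
    obtain ⟨θ, hθ, _⟩ := ULKT.ulip_lg false φ P Q
    exact ⟨θ, hKT ▸ hθ⟩
  · intro φ P Q
    obtain ⟨θ, hθ, hd⟩ := ULKT.ulip_lg false φ P Q
    exact ⟨θ, hKT ▸ hθ, hd⟩
  · intro φ P Q
    obtain ⟨θ, hθ, _⟩ := ULKT.ulip_lg true φ P Q
    exact ⟨θ, hKTB ▸ hθ⟩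
  · intro φ P Q
    obtain ⟨θ, hθ, hd⟩ := ULKT.ulip_lg true φ P Q
    exact ⟨θ, hKTB ▸ hθ, hd⟩
end

section
/- Let P₁,P₂,P₃ be finite pairwise-disjoint sets and Q₁,Q₂,Q₃ be finite pairwise-disjoint sets of propositional variables, let φ be a (P₁∪P₂, Q₁∪Q₂)-formula, let M=(W,≺,⊩) and M'=(W',≺',⊩') be finite transitive irreflexive Kripke models, let w ∈ W, w' ∈ W', and let m ∈ ω. If Th_{3n(φ)+3}^{(P₂,Q₂)}(w) ⊆ Th_{3n(φ)+3}^{(P₂,Q₂)}(w'), then there exist a finite transitive irreflexive Kripke model M* = (W*,≺*,⊩*) and w* ∈ W* such that for every subformula ψ of φ: (1) if ψ is a (P₁∪P₂, Q₁∪Q₂)-formula and w ⊩ ψ, then w* ⊩* ψ; (2) if ψ is a (Q₁∪Q₂, P₁∪P₂)-formula and w ⊮ ψ, then w* ⊮* ψ; and moreover (3) Th_m^{(P₂∪P₃,Q₂∪Q₃)}(w*) ⊆ Th_m^{(P₂∪P₃,Q₂∪Q₃)}(w'). -/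
namespace GLAux

open Formula

/-! ### Basic satisfaction lemmas -/

lemma sat_var (M : KripkeModel) (p : ℕ) (w : M.W) : M.Sat (var p) w ↔ M.val w p := Iff.rfl

lemma sat_bot (M : KripkeModel) (w : M.W) : ¬ M.Sat bot w := fun h => h

lemma sat_imp (M : KripkeModel) (a b : Formula) (w : M.W) :
    M.Sat (a.imp b) w ↔ (M.Sat a w → M.Sat b w) := Iff.rfl

lemma sat_box (M : KripkeModel) (a : Formula) (w : M.W) :
    M.Sat a.box w ↔ ∀ v, M.rel w v → M.Sat a v := Iff.rfl

lemma sat_neg (M : KripkeModel) (a : Formula) (w : M.W) :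
    M.Sat a.neg w ↔ ¬ M.Sat a w := Iff.rfl

lemma sat_top (M : KripkeModel) (w : M.W) : M.Sat top w := fun h => h

lemma sat_and (M : KripkeModel) (a b : Formula) (w : M.W) :
    M.Sat (a.and b) w ↔ M.Sat a w ∧ M.Sat b w := by
  simp only [Formula.and, sat_neg, sat_imp]
  tauto

lemma sat_iff (M : KripkeModel) (a b : Formula) (w : M.W) :
    M.Sat (Formula.iff a b) w ↔ (M.Sat a w ↔ M.Sat b w) := by
  simp only [Formula.iff, sat_and, sat_imp]
  tauto

lemma sat_dia (M : KripkeModel) (a : Formula) (w : M.W) :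
    M.Sat a.dia w ↔ ∃ v, M.rel w v ∧ M.Sat a v := by
  simp only [Formula.dia, sat_neg, sat_box]
  push_neg
  tauto

/-! ### Polarity (vsgn) computation lemmas -/

lemma vsgn_neg (a : Formula) (b : Bool) : a.neg.vsgn b = a.vsgn (!b) := by
  simp [Formula.neg, Formula.vsgn]

lemma vsgn_top (b : Bool) : (top : Formula).vsgn b = ∅ := by
  simp [Formula.top, Formula.neg, Formula.vsgn]

lemma vsgn_and (a c : Formula) (b : Bool) : (a.and c).vsgn b = a.vsgn b ∪ c.vsgn b := by
  simp [Formula.and, Formula.neg, Formula.vsgn, Bool.not_not]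

lemma vsgn_dia (a : Formula) (b : Bool) : a.dia.vsgn b = a.vsgn b := by
  simp [Formula.dia, Formula.neg, Formula.vsgn, Bool.not_not]

/-! ### PQFormula lemmas -/

lemma pq_var {P Q : Finset ℕ} {p : ℕ} (hp : p ∈ P) : PQFormula P Q (var p) := by
  constructor
  · intro x hx
    simp only [vpos, Formula.vsgn, Finset.mem_singleton] at hx
    exact hx ▸ hp
  · intro x hx
    simp only [vneg, Formula.vsgn] at hx
    exact absurd hx (Finset.notMem_empty x)

lemma pq_bot {P Q : Finset ℕ} : PQFormula P Q bot := by
  constructor <;> intro x hx <;>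
    simp only [vpos, vneg, Formula.vsgn] at hx <;> exact absurd hx (Finset.notMem_empty x)

lemma pq_top {P Q : Finset ℕ} : PQFormula P Q top := by
  constructor <;> intro x hx <;>
    simp only [vpos, vneg, vsgn_top] at hx <;> exact absurd hx (Finset.notMem_empty x)

lemma pq_imp_iff {P Q : Finset ℕ} {a b : Formula} :
    PQFormula P Q (a.imp b) ↔ PQFormula Q P a ∧ PQFormula P Q b := by
  simp only [PQFormula, vpos, vneg, Formula.vsgn, Bool.not_true, Bool.not_false,
    Finset.union_subset_iff]
  tauto

lemma pq_box_iff {P Q : Finset ℕ} {a : Formula} :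
    PQFormula P Q a.box ↔ PQFormula P Q a := by
  simp only [PQFormula, vpos, vneg, Formula.vsgn]

lemma pq_neg_iff {P Q : Finset ℕ} {a : Formula} :
    PQFormula P Q a.neg ↔ PQFormula Q P a := by
  simp only [PQFormula, vpos, vneg, vsgn_neg, Bool.not_true, Bool.not_false]
  tauto

lemma pq_and {P Q : Finset ℕ} {a b : Formula} (ha : PQFormula P Q a) (hb : PQFormula P Q b) :
    PQFormula P Q (a.and b) := by
  constructor
  · simp only [vpos, vsgn_and, Finset.union_subset_iff]
    exact ⟨ha.1, hb.1⟩
  · simp only [vneg, vsgn_and, Finset.union_subset_iff]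
    exact ⟨ha.2, hb.2⟩

lemma pq_dia {P Q : Finset ℕ} {a : Formula} (ha : PQFormula P Q a) : PQFormula P Q a.dia := by
  exact ⟨by simpa only [vpos, vsgn_dia] using ha.1, by simpa only [vneg, vsgn_dia] using ha.2⟩

/-! ### depth lemmas -/

lemma depth_neg (a : Formula) : a.neg.depth = a.depth := by simp [Formula.neg, Formula.depth]

lemma depth_top : (top : Formula).depth = 0 := rfl

lemma depth_and (a b : Formula) : (a.and b).depth = max a.depth b.depth := by
  simp [Formula.and, Formula.neg, Formula.depth]

lemma depth_dia (a : Formula) : a.dia.depth = a.depth + 1 := by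
  simp [Formula.dia, Formula.neg, Formula.depth]

end GLAux

namespace GLAux

open Formula

/-! ### conjList / disjList -/

def myOr (a b : Formula) : Formula := (a.imp bot).imp b

def disjList : List Formula → Formula
  | [] => bot
  | a :: l => myOr a (disjList l)

lemma sat_myOr (M : KripkeModel) (a b : Formula) (w : M.W) :
    M.Sat (myOr a b) w ↔ M.Sat a w ∨ M.Sat b w := by
  simp only [myOr, sat_imp]
  constructor
  · intro h
    by_cases ha : M.Sat a w
    · exact Or.inl ha
    · exact Or.inr (h (fun hb => absurd hb ha))
  · rintro (ha | hb) hc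
    · exact absurd (hc ha) (sat_bot M w)
    · exact hb

lemma vsgn_myOr (a c : Formula) (b : Bool) : (myOr a c).vsgn b = a.vsgn b ∪ c.vsgn b := by
  simp [myOr, Formula.vsgn, Bool.not_not]

lemma depth_myOr (a b : Formula) : (myOr a b).depth = max a.depth b.depth := by
  simp [myOr, Formula.depth]

lemma pq_myOr {P Q : Finset ℕ} {a b : Formula} (ha : PQFormula P Q a) (hb : PQFormula P Q b) :
    PQFormula P Q (myOr a b) := by
  constructor
  · simp only [vpos, vsgn_myOr, Finset.union_subset_iff]; exact ⟨ha.1, hb.1⟩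
  · simp only [vneg, vsgn_myOr, Finset.union_subset_iff]; exact ⟨ha.2, hb.2⟩

lemma sat_conjList (M : KripkeModel) (l : List Formula) (w : M.W) :
    M.Sat (conjList l) w ↔ ∀ a ∈ l, M.Sat a w := by
  induction l with
  | nil => simpa [conjList] using sat_top M w
  | cons a l ih => simp [conjList, sat_and, ih]

lemma sat_disjList (M : KripkeModel) (l : List Formula) (w : M.W) :
    M.Sat (disjList l) w ↔ ∃ a ∈ l, M.Sat a w := by
  induction l with
  | nil => exact iff_of_false (sat_bot M w) (by simp)
  | cons a l ih => simp [disjList, sat_myOr, ih]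

lemma pq_conjList {P Q : Finset ℕ} {l : List Formula} (h : ∀ a ∈ l, PQFormula P Q a) :
    PQFormula P Q (conjList l) := by
  induction l with
  | nil => exact pq_top
  | cons a l ih =>
      exact pq_and (h a List.mem_cons_self) (ih (fun b hb => h b (List.mem_cons_of_mem a hb)))

lemma pq_disjList {P Q : Finset ℕ} {l : List Formula} (h : ∀ a ∈ l, PQFormula P Q a) :
    PQFormula P Q (disjList l) := by
  induction l with
  | nil => exact pq_bot
  | cons a l ih =>
      exact pq_myOr (h a List.mem_cons_self) (ih (fun b hb => h b (List.mem_cons_of_mem a hb)))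

lemma depth_conjList {k : ℕ} {l : List Formula} (h : ∀ a ∈ l, a.depth ≤ k) :
    (conjList l).depth ≤ k := by
  induction l with
  | nil => simp [conjList, Formula.top, Formula.neg, Formula.depth]
  | cons a l ih =>
      rw [conjList, depth_and]
      exact max_le (h a List.mem_cons_self) (ih (fun b hb => h b (List.mem_cons_of_mem a hb)))

lemma depth_disjList {k : ℕ} {l : List Formula} (h : ∀ a ∈ l, a.depth ≤ k) :
    (disjList l).depth ≤ k := by
  induction l with
  | nil => simp [disjList, Formula.depth]
  | cons a l ih =>
      rw [disjList, depth_myOr]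
      exact max_le (h a List.mem_cons_self) (ih (fun b hb => h b (List.mem_cons_of_mem a hb)))

/-! ### Soundness of K -/

/-- The model obtained by reading substituted formulas into the valuation. -/
def substModel (N : KripkeModel) (σ : ℕ → Formula) : KripkeModel :=
  ⟨N.W, N.nonempty, N.rel, fun x p => N.Sat (σ p) x⟩

lemma sat_subst (N : KripkeModel) (σ : ℕ → Formula) (ψ : Formula) :
    ∀ w : N.W, N.Sat (Formula.subst σ ψ) w ↔ (substModel N σ).Sat ψ w := by
  induction ψ with
  | var p => intro w; exact Iff.rfl
  | bot => intro w; exact Iff.rfl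
  | imp a b iha ihb =>
      intro w
      simp only [Formula.subst, sat_imp, iha w, ihb w]
      exact Iff.rfl
  | box a iha =>
      intro w
      simp only [Formula.subst, sat_box]
      constructor
      · intro h v hv; exact (iha v).1 (h v hv)
      · intro h v hv; exact (iha v).2 (h v hv)

theorem theoryK_sound {ψ : Formula} (hψ : ψ ∈ TheoryK) (N : KripkeModel) (x : N.W) :
    N.Sat ψ x := by
  classical
  have hval : IsNormal {χ : Formula | ∀ (N : KripkeModel) (x : N.W), N.Sat χ x} := by
    constructor
    · intro χ hχ N x
      set v : Formula → Bool := fun ρ => if N.Sat ρ x then true else false with hv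
      have hbot : v Formula.bot = false := by
        simp only [hv, if_neg (sat_bot N x)]
      have himp : ∀ ρ θ : Formula, v (ρ.imp θ) = (!v ρ || v θ) := by
        intro ρ θ
        by_cases hρ : N.Sat ρ x <;> by_cases hθ : N.Sat θ x <;>
          simp [hv, hρ, hθ, sat_imp]
      have := hχ v hbot himp
      by_contra hc
      simp only [hv, if_neg hc] at this
      exact Bool.false_ne_true this
    · intro N x h1 h2 y hy
      exact h1 y hy (h2 y hy)
    · intro a b hab ha N x
      exact hab N x (ha N x)
    · intro a ha N x y _
      exact ha N y
    · intro a ha σ N x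
      exact (sat_subst N σ a x).2 (ha (substModel N σ) x)
  exact Set.mem_sInter.1 hψ _ ⟨hval, by simp⟩ N x

lemma sat_of_iff_theoryK {ρ χ : Formula} (h : Formula.iff ρ χ ∈ TheoryK) (N : KripkeModel)
    (x : N.W) : N.Sat ρ x ↔ N.Sat χ x :=
  (sat_iff N ρ χ x).1 (theoryK_sound h N x)

/-! ### subformulas -/

lemma mem_subfmls_self (ψ : Formula) : ψ ∈ ψ.subfmls := by
  cases ψ <;> simp [Formula.subfmls]

lemma subfmls_subset {φ ψ : Formula} (h : ψ ∈ φ.subfmls) : ψ.subfmls ⊆ φ.subfmls := by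
  induction φ with
  | var p =>
      simp only [Formula.subfmls, Finset.mem_singleton] at h
      subst h; exact subset_rfl
  | bot =>
      simp only [Formula.subfmls, Finset.mem_singleton] at h
      subst h; exact subset_rfl
  | imp a b iha ihb =>
      simp only [Formula.subfmls, Finset.mem_insert, Finset.mem_union] at h
      rcases h with h | h | h
      · subst h; exact subset_rfl
      · exact subset_trans (iha h) (by
          intro x hx
          simp only [Formula.subfmls, Finset.mem_insert, Finset.mem_union]
          exact Or.inr (Or.inl hx))
      · exact subset_trans (ihb h) (by
          intro x hx
          simp only [Formula.subfmls, Finset.mem_insert, Finset.mem_union]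
          exact Or.inr (Or.inr hx))
  | box a iha =>
      simp only [Formula.subfmls, Finset.mem_insert] at h
      rcases h with h | h
      · subst h; exact subset_rfl
      · exact subset_trans (iha h) (by
          intro x hx
          simp only [Formula.subfmls, Finset.mem_insert]
          exact Or.inr hx)

lemma imp_left_mem {φ a b : Formula} (h : a.imp b ∈ φ.subfmls) : a ∈ φ.subfmls :=
  subfmls_subset h (by simp [Formula.subfmls, mem_subfmls_self])

lemma imp_right_mem {φ a b : Formula} (h : a.imp b ∈ φ.subfmls) : b ∈ φ.subfmls :=
  subfmls_subset h (by simp [Formula.subfmls, mem_subfmls_self])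

lemma box_arg_mem {φ a : Formula} (h : a.box ∈ φ.subfmls) : a ∈ φ.subfmls :=
  subfmls_subset h (by simp [Formula.subfmls, mem_subfmls_self])

/-! ### Maximal elements -/

lemma exists_maximal {α : Type} [Finite α] (r : α → α → Prop) (htr : Transitive r)
    (hir : Irreflexive r) (A : Set α) (hA : A.Nonempty) :
    ∃ a ∈ A, ∀ b ∈ A, ¬ r a b := by
  letI : IsTrans α (fun x y => r y x) := ⟨fun _ _ _ h1 h2 => htr h2 h1⟩
  letI : IsIrrefl α (fun x y => r y x) := ⟨fun x h => hir x h⟩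
  have hwf := Finite.wellFounded_of_trans_of_irrefl (fun x y : α => r y x)
  obtain ⟨a, ha, hmax⟩ := hwf.has_min A hA
  exact ⟨a, ha, fun b hb hr => hmax b hb hr⟩

end GLAux

namespace GLAux

open Formula

/-! ### The construction -/

/-- Set of boxed subformula arguments of φ; its card is `φ.boxCount`. -/
def BxS (φ : Formula) : Finset Formula := φ.subfmls.filter fun σ => σ.box ∈ φ.subfmls

lemma boxCount_eq_BxS (φ : Formula) : φ.boxCount = (BxS φ).card := rfl

open Classical in
/-- The boxes of φ true at u. -/
noncomputable def Sval (M : KripkeModel) (φ : Formula) (u : M.W) : Finset Formula :=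
  (BxS φ).filter fun σ => M.Sat σ.box u

open Classical in
lemma mem_Sval {M : KripkeModel} {φ : Formula} {u : M.W} {σ : Formula} :
    σ ∈ Sval M φ u ↔ σ ∈ BxS φ ∧ M.Sat σ.box u := by
  classical
  unfold Sval; exact Finset.mem_filter

lemma Sval_subset (M : KripkeModel) (φ : Formula) (u : M.W) : Sval M φ u ⊆ BxS φ := by
  classical
  unfold Sval; exact Finset.filter_subset _ _

/-- The budget at u. -/
noncomputable def REQ (M : KripkeModel) (φ : Formula) (u : M.W) : ℕ :=
  3 * ((BxS φ).card - (Sval M φ u).card) + 2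

/-- Directed (P2,Q2)-theory transfer up to depth k. -/
def Below (M M' : KripkeModel) (P2 Q2 : Finset ℕ) (k : ℕ) (u : M.W) (z : M'.W) : Prop :=
  ∀ χ : Formula, PQFormula P2 Q2 χ → χ.depth ≤ k → M.Sat χ u → M'.Sat χ z

lemma below_mono {M M' : KripkeModel} {P2 Q2 : Finset ℕ} {k j : ℕ} {u : M.W} {z : M'.W}
    (hjk : j ≤ k) (h : Below M M' P2 Q2 k u z) : Below M M' P2 Q2 j u z :=
  fun χ h1 h2 h3 => h χ h1 (h2.trans hjk) h3

lemma below_of_members {F : ℕ → Finset ℕ → Finset ℕ → List Formula} (hF : IsFamily F)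
    {M M' : KripkeModel} {P2 Q2 : Finset ℕ} {k : ℕ} {u : M.W} {z : M'.W}
    (hm : ∀ ρ ∈ F k P2 Q2, M.Sat ρ u → M'.Sat ρ z) : Below M M' P2 Q2 k u z := by
  intro χ hχpq hχd hχu
  obtain ⟨ρ, hρmem, hρiff⟩ := (hF k P2 Q2).2 χ hχpq hχd
  exact (sat_of_iff_theoryK hρiff M' z).1 (hm ρ hρmem ((sat_of_iff_theoryK hρiff M u).2 hχu))

open Classical in
/-- Characteristic formula of u at depth k (w.r.t. the family F and (P2,Q2)). -/
noncomputable def Cfm (F : ℕ → Finset ℕ → Finset ℕ → List Formula) (M : KripkeModel)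
    (P2 Q2 : Finset ℕ) (k : ℕ) (u : M.W) : Formula :=
  conjList ((F k P2 Q2).filter fun χ => decide (M.Sat χ u))

lemma sat_Cfm_self (F : ℕ → Finset ℕ → Finset ℕ → List Formula) (M : KripkeModel)
    (P2 Q2 : Finset ℕ) (k : ℕ) (u : M.W) : M.Sat (Cfm F M P2 Q2 k u) u := by
  classical
  rw [Cfm, sat_conjList]
  intro a ha
  rw [List.mem_filter] at ha
  exact of_decide_eq_true ha.2

lemma below_of_sat_Cfm {F : ℕ → Finset ℕ → Finset ℕ → List Formula} (hF : IsFamily F)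
    {M M' : KripkeModel} {P2 Q2 : Finset ℕ} {k : ℕ} {u : M.W} {z : M'.W}
    (hz : M'.Sat (Cfm F M P2 Q2 k u) z) : Below M M' P2 Q2 k u z := by
  classical
  apply below_of_members hF
  intro ρ hρ hρu
  rw [Cfm, sat_conjList] at hz
  exact hz ρ (List.mem_filter.2 ⟨hρ, decide_eq_true hρu⟩)

lemma pq_Cfm {F : ℕ → Finset ℕ → Finset ℕ → List Formula} (hF : IsFamily F)
    (M : KripkeModel) (P2 Q2 : Finset ℕ) (k : ℕ) (u : M.W) :
    PQFormula P2 Q2 (Cfm F M P2 Q2 k u) :=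
  pq_conjList fun a ha => ((hF k P2 Q2).1 a (List.mem_filter.1 ha).1).1

lemma depth_Cfm {F : ℕ → Finset ℕ → Finset ℕ → List Formula} (hF : IsFamily F)
    (M : KripkeModel) (P2 Q2 : Finset ℕ) (k : ℕ) (u : M.W) :
    (Cfm F M P2 Q2 k u).depth ≤ k :=
  depth_conjList fun a ha => ((hF k P2 Q2).1 a (List.mem_filter.1 ha).1).2

/-- The condition for v to be an admissible witness for the imposed set S. -/
def condS (M : KripkeModel) (φ : Formula) (S : Finset Formula) (v : M.W) : Prop :=
  S ⊆ BxS φ ∧ ∀ σ ∈ S, M.Sat σ v ∧ M.Sat σ.box v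

lemma condS_subset_Sval {M : KripkeModel} {φ : Formula} {S : Finset Formula} {v : M.W}
    (h : condS M φ S v) : S ⊆ Sval M φ v :=
  fun σ hσ => mem_Sval.2 ⟨h.1 hσ, (h.2 σ hσ).2⟩

lemma card_lt_of_condS {M : KripkeModel} {φ : Formula} {S : Finset Formula} {v : M.W}
    (h : condS M φ S v) (h2 : ¬ Sval M φ v = S) :
    (BxS φ).card - (Sval M φ v).card < (BxS φ).card - S.card := by
  have h1 : S.card < (Sval M φ v).card :=
    Finset.card_lt_card (ssubset_of_subset_of_ne (condS_subset_Sval h) (Ne.symm h2))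
  have h3 : (Sval M φ v).card ≤ (BxS φ).card := Finset.card_le_card (Sval_subset M φ v)
  omega

open Classical in
/-- The recursive invariant formula ξ_S. -/
noncomputable def xi (F : ℕ → Finset ℕ → Finset ℕ → List Formula) (M : KripkeModel)
    (P2 Q2 : Finset ℕ) (φ : Formula) [Fintype M.W] (S : Finset Formula) : Formula :=
  disjList ((Finset.univ : Finset M.W).toList.filterMap fun v =>
    if h : condS M φ S v then
      some ((Cfm F M P2 Q2 (REQ M φ v) v).and
        (if h2 : Sval M φ v = S then Formula.top else (xi F M P2 Q2 φ (Sval M φ v)).box))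
    else none)
  termination_by (BxS φ).card - S.card
  decreasing_by exact card_lt_of_condS h h2

end GLAux

namespace GLAux

open Formula

/-! ### Properties of ξ -/

theorem xi_pq {F : ℕ → Finset ℕ → Finset ℕ → List Formula} (hF : IsFamily F)
    (M : KripkeModel) (P2 Q2 : Finset ℕ) (φ : Formula) [Fintype M.W] (S : Finset Formula) :
    PQFormula P2 Q2 (xi F M P2 Q2 φ S) := by
  rw [xi]
  apply pq_disjList
  intro a ha
  rw [List.mem_filterMap] at ha
  obtain ⟨v, -, hv⟩ := ha
  by_cases h : condS M φ S v
  · rw [dif_pos h] at hv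
    injection hv with hv
    subst hv
    refine pq_and (pq_Cfm hF M P2 Q2 _ v) ?_
    by_cases h2 : Sval M φ v = S
    · rw [dif_pos h2]; exact pq_top
    · rw [dif_neg h2]
      exact pq_box_iff.2 (xi_pq hF M P2 Q2 φ (Sval M φ v))
  · rw [dif_neg h] at hv; cases hv
  termination_by (BxS φ).card - S.card
  decreasing_by exact card_lt_of_condS h h2

theorem xi_depth {F : ℕ → Finset ℕ → Finset ℕ → List Formula} (hF : IsFamily F)
    (M : KripkeModel) (P2 Q2 : Finset ℕ) (φ : Formula) [Fintype M.W] (S : Finset Formula) :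
    (xi F M P2 Q2 φ S).depth ≤ 3 * ((BxS φ).card - S.card) + 2 := by
  rw [xi]
  apply depth_disjList
  intro a ha
  rw [List.mem_filterMap] at ha
  obtain ⟨v, -, hv⟩ := ha
  by_cases h : condS M φ S v
  · rw [dif_pos h] at hv
    injection hv with hv
    subst hv
    rw [depth_and]
    have hsub : S ⊆ Sval M φ v := condS_subset_Sval h
    have hc1 : S.card ≤ (Sval M φ v).card := Finset.card_le_card hsub
    have hc2 : (Sval M φ v).card ≤ (BxS φ).card := Finset.card_le_card (Sval_subset M φ v)
    apply max_le
    · exact (depth_Cfm hF M P2 Q2 (REQ M φ v) v).trans (by rw [REQ]; omega)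
    · by_cases h2 : Sval M φ v = S
      · rw [dif_pos h2]; rw [depth_top]; omega
      · rw [dif_neg h2]
        have hrec := xi_depth hF M P2 Q2 φ (Sval M φ v)
        have hlt : S.card < (Sval M φ v).card :=
          Finset.card_lt_card (ssubset_of_subset_of_ne hsub (Ne.symm h2))
        show (xi F M P2 Q2 φ (Sval M φ v)).depth + 1 ≤ _
        omega
  · rw [dif_neg h] at hv; cases hv
  termination_by (BxS φ).card - S.card
  decreasing_by exact card_lt_of_condS h h2

theorem xi_sat (F : ℕ → Finset ℕ → Finset ℕ → List Formula)
    (M : KripkeModel) (P2 Q2 : Finset ℕ) (φ : Formula) [Fintype M.W]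
    (hMtr : Transitive M.rel) (S : Finset Formula) (v : M.W) (hc : condS M φ S v) :
    M.Sat (xi F M P2 Q2 φ S) v := by
  rw [xi, sat_disjList]
  refine ⟨(Cfm F M P2 Q2 (REQ M φ v) v).and
      (if _ : Sval M φ v = S then Formula.top else (xi F M P2 Q2 φ (Sval M φ v)).box),
    List.mem_filterMap.2 ⟨v, Finset.mem_toList.2 (Finset.mem_univ v), by rw [dif_pos hc]⟩, ?_⟩
  rw [sat_and]
  refine ⟨sat_Cfm_self F M P2 Q2 _ v, ?_⟩
  by_cases h2 : Sval M φ v = S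
  · rw [dif_pos h2]; exact sat_top M v
  · rw [dif_neg h2]
    rw [sat_box]
    intro y hy
    refine xi_sat F M P2 Q2 φ hMtr (Sval M φ v) y ⟨Sval_subset M φ v, ?_⟩
    intro σ hσ
    have hb : M.Sat σ.box v := (mem_Sval.1 hσ).2
    exact ⟨hb y hy, fun t ht => hb t (hMtr hy ht)⟩
  termination_by (BxS φ).card - S.card
  decreasing_by exact card_lt_of_condS hc h2

lemma box_xi_self (F : ℕ → Finset ℕ → Finset ℕ → List Formula)
    (M : KripkeModel) (P2 Q2 : Finset ℕ) (φ : Formula) [Fintype M.W]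
    (hMtr : Transitive M.rel) (v : M.W) :
    M.Sat ((xi F M P2 Q2 φ (Sval M φ v)).box) v := by
  rw [sat_box]
  intro x hx
  refine xi_sat F M P2 Q2 φ hMtr (Sval M φ v) x ⟨Sval_subset M φ v, ?_⟩
  intro σ hσ
  have hb : M.Sat σ.box v := (mem_Sval.1 hσ).2
  exact ⟨hb x hx, fun t ht => hb t (hMtr hx ht)⟩

lemma xi_elim {F : ℕ → Finset ℕ → Finset ℕ → List Formula} {M M' : KripkeModel}
    {P2 Q2 : Finset ℕ} {φ : Formula} [Fintype M.W] {S : Finset Formula} {z : M'.W}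
    (hz : M'.Sat (xi F M P2 Q2 φ S) z) :
    ∃ v : M.W, condS M φ S v ∧ M'.Sat (Cfm F M P2 Q2 (REQ M φ v) v) z ∧
      (Sval M φ v = S ∨ M'.Sat ((xi F M P2 Q2 φ (Sval M φ v)).box) z) := by
  rw [xi, sat_disjList] at hz
  obtain ⟨a, ha, hsat⟩ := hz
  rw [List.mem_filterMap] at ha
  obtain ⟨v, -, hv⟩ := ha
  by_cases h : condS M φ S v
  · rw [dif_pos h] at hv
    injection hv with hv
    subst hv
    rw [sat_and] at hsat
    obtain ⟨hC, hrest⟩ := hsat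
    refine ⟨v, h, hC, ?_⟩
    by_cases h2 : Sval M φ v = S
    · exact Or.inl h2
    · rw [dif_neg h2] at hrest; exact Or.inr hrest
  · rw [dif_neg h] at hv; cases hv

/-! ### The Tri relation -/

/-- Transfer of activated boxes of φ. -/
def Tri (M : KripkeModel) (φ : Formula) (u v : M.W) : Prop :=
  ∀ σ ∈ BxS φ, M.Sat σ.box u → M.Sat σ v ∧ M.Sat σ.box v

lemma tri_of_rel {M : KripkeModel} (hMtr : Transitive M.rel) {φ : Formula} {u v : M.W}
    (h : M.rel u v) : Tri M φ u v :=
  fun σ _ hb => ⟨hb v h, fun z hz => hb z (hMtr h hz)⟩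

lemma tri_trans {M : KripkeModel} {φ : Formula} {u v t : M.W}
    (h1 : Tri M φ u v) (h2 : Tri M φ v t) : Tri M φ u t := by
  intro σ hσ hb
  exact h2 σ hσ (h1 σ hσ hb).2

/-! ### Good pairs and the model M* -/

/-- The invariant for worlds of the constructed model. -/
def Good (F : ℕ → Finset ℕ → Finset ℕ → List Formula) (M M' : KripkeModel)
    (P2 Q2 : Finset ℕ) (φ : Formula) [Fintype M.W] (p : M'.W × M.W) : Prop :=
  Below M M' P2 Q2 (REQ M φ p.2) p.2 p.1 ∧
    M'.Sat ((xi F M P2 Q2 φ (Sval M φ p.2)).box) p.1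

/-- The constructed model M*. -/
def MstM (F : ℕ → Finset ℕ → Finset ℕ → List Formula) (M M' : KripkeModel)
    (P1 P2 Q2 Q3 : Finset ℕ) (φ : Formula) [Fintype M.W]
    (hne : Nonempty {p : M'.W × M.W // Good F M M' P2 Q2 φ p}) : KripkeModel where
  W := {p : M'.W × M.W // Good F M M' P2 Q2 φ p}
  nonempty := hne
  rel a b := M'.rel a.1.1 b.1.1 ∧ Tri M φ a.1.2 b.1.2
  val a q := (q ∈ P1 ∪ P2 ∧ M.val a.1.2 q) ∨ (q ∈ Q2 ∪ Q3 ∧ M'.val a.1.1 q)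

/-! ### The two production lemmas -/

/-- Production of successors matching a given M'-successor ("reset"). -/
lemma reset {F : ℕ → Finset ℕ → Finset ℕ → List Formula} (hF : IsFamily F)
    {M M' : KripkeModel} {P2 Q2 : Finset ℕ} {φ : Formula} [Fintype M.W]
    (hM'tr : Transitive M'.rel) {z zh : M'.W} {u : M.W}
    (hg : Good F M M' P2 Q2 φ (z, u)) (hrel : M'.rel z zh) :
    ∃ v : M.W, Tri M φ u v ∧ Good F M M' P2 Q2 φ (zh, v) := by
  have hξ : M'.Sat (xi F M P2 Q2 φ (Sval M φ u)) zh := hg.2 zh hrel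
  obtain ⟨v, hc, hC, hrest⟩ := xi_elim hξ
  refine ⟨v, ?_, below_of_sat_Cfm hF hC, ?_⟩
  · intro σ hσ hb
    exact hc.2 σ (mem_Sval.2 ⟨hσ, hb⟩)
  · rcases hrest with heq | hbox
    · rw [heq]
      rw [sat_box]
      intro y hy
      exact hg.2 y (hM'tr hrel hy)
    · exact hbox

/-- Production of successors refuting a box ("creation", via a maximal witness). -/
lemma creation {F : ℕ → Finset ℕ → Finset ℕ → List Formula} (hF : IsFamily F)
    {M M' : KripkeModel} {P2 Q2 : Finset ℕ} {φ : Formula} [Fintype M.W]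
    (hMtr : Transitive M.rel) (hMir : Irreflexive M.rel)
    {z : M'.W} {u y₀ : M.W} {σ : Formula}
    (hg : Good F M M' P2 Q2 φ (z, u)) (hrel : M.rel u y₀) (hσy : ¬ M.Sat σ y₀)
    (hσB : σ ∈ BxS φ) :
    ∃ (yt : M.W) (zh : M'.W), M'.rel z zh ∧ Tri M φ u yt ∧ ¬ M.Sat σ yt ∧
      Good F M M' P2 Q2 φ (zh, yt) := by
  obtain ⟨yt, hytA, hmax⟩ := exists_maximal M.rel hMtr hMir
    {y | M.rel u y ∧ ¬ M.Sat σ y} ⟨y₀, hrel, hσy⟩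
  obtain ⟨hrelyt, hσyt⟩ := hytA
  have hboxσ : M.Sat σ.box yt := by
    rw [sat_box]
    intro y' hy'
    by_contra hcon
    exact hmax y' ⟨hMtr hrelyt hy', hcon⟩ hy'
  have htri : Tri M φ u yt := tri_of_rel hMtr hrelyt
  have hsub : Sval M φ u ⊆ Sval M φ yt := by
    intro τ hτ
    rw [mem_Sval] at hτ ⊢
    exact ⟨hτ.1, (htri τ hτ.1 hτ.2).2⟩
  have hmemσ : σ ∈ Sval M φ yt := mem_Sval.2 ⟨hσB, hboxσ⟩
  have hnotσ : σ ∉ Sval M φ u := by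
    rw [mem_Sval]
    rintro ⟨-, hb⟩
    exact hσy (hb y₀ hrel)
  have hcard : (Sval M φ u).card < (Sval M φ yt).card :=
    Finset.card_lt_card ((Finset.ssubset_iff_of_subset hsub).2 ⟨σ, hmemσ, hnotσ⟩)
  have hcard2 : (Sval M φ yt).card ≤ (BxS φ).card := Finset.card_le_card (Sval_subset M φ yt)
  set θ : Formula := Formula.dia ((Cfm F M P2 Q2 (REQ M φ yt) yt).and
    ((xi F M P2 Q2 φ (Sval M φ yt)).box)) with hθ
  have hθsat : M.Sat θ u := by
    rw [hθ, sat_dia]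
    exact ⟨yt, hrelyt, (sat_and M _ _ yt).2
      ⟨sat_Cfm_self F M P2 Q2 _ yt, box_xi_self F M P2 Q2 φ hMtr yt⟩⟩
  have hθpq : PQFormula P2 Q2 θ := by
    rw [hθ]
    exact pq_dia (pq_and (pq_Cfm hF M P2 Q2 _ yt)
      (pq_box_iff.2 (xi_pq hF M P2 Q2 φ (Sval M φ yt))))
  have hθdepth : θ.depth ≤ REQ M φ u := by
    rw [hθ, depth_dia, depth_and]
    have d1 := depth_Cfm hF M P2 Q2 (REQ M φ yt) yt
    have d2 := xi_depth hF M P2 Q2 φ (Sval M φ yt)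
    have hbd : ((xi F M P2 Q2 φ (Sval M φ yt)).box).depth
        = (xi F M P2 Q2 φ (Sval M φ yt)).depth + 1 := rfl
    rw [hbd]
    have hmax2 : max (Cfm F M P2 Q2 (REQ M φ yt) yt).depth
        ((xi F M P2 Q2 φ (Sval M φ yt)).depth + 1) ≤ REQ M φ yt + 1 := by
      apply max_le
      · exact d1.trans (Nat.le_succ _)
      · rw [REQ]; omega
    rw [REQ, REQ] at *
    omega
  have hθ' : M'.Sat θ z := hg.1 θ hθpq hθdepth hθsat
  rw [hθ, sat_dia] at hθ'
  obtain ⟨zh, hzh, hsat⟩ := hθ'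
  rw [sat_and] at hsat
  exact ⟨yt, zh, hzh, htri, hσyt, below_of_sat_Cfm hF hsat.1, hsat.2⟩

end GLAux

namespace GLAux

open Formula

/-- Transfer of subformulas of φ from w-side into M*. -/
lemma Tmain {F : ℕ → Finset ℕ → Finset ℕ → List Formula} (hF : IsFamily F)
    {M M' : KripkeModel} {P1 P2 Q1 Q2 Q3 : Finset ℕ} {φ : Formula}
    [Fintype M.W] (hMtr : Transitive M.rel) (hMir : Irreflexive M.rel)
    (hQ12 : Disjoint Q1 Q2) (hQ13 : Disjoint Q1 Q3)
    (hne : Nonempty {p : M'.W × M.W // Good F M M' P2 Q2 φ p}) :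
    ∀ ψ, ψ ∈ φ.subfmls → ∀ a : (MstM F M M' P1 P2 Q2 Q3 φ hne).W,
      (PQFormula (P1 ∪ P2) (Q1 ∪ Q2) ψ → M.Sat ψ a.1.2 →
        (MstM F M M' P1 P2 Q2 Q3 φ hne).Sat ψ a) ∧
      (PQFormula (Q1 ∪ Q2) (P1 ∪ P2) ψ → (MstM F M M' P1 P2 Q2 Q3 φ hne).Sat ψ a →
        M.Sat ψ a.1.2) := by
  intro ψ
  induction ψ with
  | var p =>
      intro _ a
      constructor
      · intro hpq hsat
        have hp : p ∈ P1 ∪ P2 := hpq.1 (by simp [Formula.vpos, Formula.vsgn])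
        exact Or.inl ⟨hp, hsat⟩
      · intro hpq hsat
        rcases hsat with ⟨-, hval⟩ | ⟨hq23, hval⟩
        · exact hval
        · have hp : p ∈ Q1 ∪ Q2 := hpq.1 (by simp [Formula.vpos, Formula.vsgn])
          have hp2 : p ∈ Q2 := by
            rcases Finset.mem_union.1 hp with h1 | h2
            · rcases Finset.mem_union.1 hq23 with h3 | h4
              · exact absurd h3 (Finset.disjoint_left.1 hQ12 h1)
              · exact absurd h4 (Finset.disjoint_left.1 hQ13 h1)
            · exact h2
          by_contra hcon
          have hnsat : M.Sat ((Formula.var p).neg) a.1.2 := fun hc => hcon hc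
          have htr := a.2.1 ((Formula.var p).neg) (pq_neg_iff.2 (pq_var hp2))
            (by rw [depth_neg]; exact Nat.zero_le _) hnsat
          exact htr hval
  | bot =>
      intro _ a
      exact ⟨fun _ hsat => absurd hsat (sat_bot M a.1.2), fun _ hsat => absurd hsat (sat_bot _ a)⟩
  | imp ψ1 ψ2 ih1 ih2 =>
      intro hmem a
      have h1 := ih1 (imp_left_mem hmem) a
      have h2 := ih2 (imp_right_mem hmem) a
      constructor
      · intro hpq hsat hs1
        obtain ⟨hpq1, hpq2⟩ := pq_imp_iff.1 hpq
        exact h2.1 hpq2 (hsat (h1.2 hpq1 hs1))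
      · intro hpq hsat hs1
        obtain ⟨hpq1, hpq2⟩ := pq_imp_iff.1 hpq
        exact h2.2 hpq2 (hsat (h1.1 hpq1 hs1))
  | box ρ ihρ =>
      intro hmem a
      have hρmem : ρ ∈ φ.subfmls := box_arg_mem hmem
      have hρBx : ρ ∈ BxS φ := by
        unfold BxS
        exact Finset.mem_filter.2 ⟨hρmem, hmem⟩
      constructor
      · intro hpq hsat
        intro b hb
        exact (ihρ hρmem b).1 (pq_box_iff.1 hpq) (hb.2 ρ hρBx hsat).1
      · intro hpq hsat
        rw [sat_box]
        by_contra hcon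
        push_neg at hcon
        obtain ⟨y₀, hy₀, hρy₀⟩ := hcon
        obtain ⟨yt, zh, hzh, htri, hρyt, hgood⟩ := creation hF hMtr hMir a.2 hy₀ hρy₀ hρBx
        exact hρyt ((ihρ hρmem ⟨(zh, yt), hgood⟩).2 (pq_box_iff.1 hpq)
          (hsat ⟨(zh, yt), hgood⟩ ⟨hzh, htri⟩))

/-- Directed (P2∪P3, Q2∪Q3)-transfer from M* to M'. -/
lemma Zmain {F : ℕ → Finset ℕ → Finset ℕ → List Formula} (hF : IsFamily F)
    {M M' : KripkeModel} {P1 P2 P3 Q1 Q2 Q3 : Finset ℕ} {φ : Formula}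
    [Fintype M.W] (hM'tr : Transitive M'.rel)
    (hP12 : Disjoint P1 P2) (hP13 : Disjoint P1 P3)
    (hne : Nonempty {p : M'.W × M.W // Good F M M' P2 Q2 φ p}) :
    ∀ θ, ∀ a : (MstM F M M' P1 P2 Q2 Q3 φ hne).W,
      (PQFormula (P2 ∪ P3) (Q2 ∪ Q3) θ → (MstM F M M' P1 P2 Q2 Q3 φ hne).Sat θ a →
        M'.Sat θ a.1.1) ∧
      (PQFormula (Q2 ∪ Q3) (P2 ∪ P3) θ → M'.Sat θ a.1.1 →
        (MstM F M M' P1 P2 Q2 Q3 φ hne).Sat θ a) := by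
  intro θ
  induction θ with
  | var p =>
      intro a
      constructor
      · intro hpq hsat
        rcases hsat with ⟨hp12, hval⟩ | ⟨-, hval⟩
        · have hp : p ∈ P2 ∪ P3 := hpq.1 (by simp [Formula.vpos, Formula.vsgn])
          have hp2 : p ∈ P2 := by
            rcases Finset.mem_union.1 hp12 with h1 | h2
            · rcases Finset.mem_union.1 hp with h3 | h4
              · exact absurd h3 (Finset.disjoint_left.1 hP12 h1)
              · exact absurd h4 (Finset.disjoint_left.1 hP13 h1)
            · exact h2
          exact a.2.1 (Formula.var p) (pq_var hp2) (Nat.zero_le _) hval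
        · exact hval
      · intro hpq hsat
        have hp : p ∈ Q2 ∪ Q3 := hpq.1 (by simp [Formula.vpos, Formula.vsgn])
        exact Or.inr ⟨hp, hsat⟩
  | bot =>
      intro a
      exact ⟨fun _ hs => absurd hs (sat_bot _ a), fun _ hs => absurd hs (sat_bot M' a.1.1)⟩
  | imp θ1 θ2 ih1 ih2 =>
      intro a
      constructor
      · intro hpq hsat hs1
        obtain ⟨hpq1, hpq2⟩ := pq_imp_iff.1 hpq
        exact (ih2 a).1 hpq2 (hsat ((ih1 a).2 hpq1 hs1))
      · intro hpq hsat hs1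
        obtain ⟨hpq1, hpq2⟩ := pq_imp_iff.1 hpq
        exact (ih2 a).2 hpq2 (hsat ((ih1 a).1 hpq1 hs1))
  | box θ0 ih =>
      intro a
      constructor
      · intro hpq hsat
        rw [sat_box]
        intro zh hzh
        obtain ⟨v, htri, hgood⟩ := reset hF hM'tr a.2 hzh
        exact (ih ⟨(zh, v), hgood⟩).1 (pq_box_iff.1 hpq) (hsat ⟨(zh, v), hgood⟩ ⟨hzh, htri⟩)
      · intro hpq hsat
        intro b hb
        exact (ih b).2 (pq_box_iff.1 hpq) (hsat b.1.1 hb.1)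

end GLAux

/-- Main lemma for GL: model extension property for the class of finite transitive
irreflexive Kripke models. -/
theorem gl_main_lemma (F : ℕ → Finset ℕ → Finset ℕ → List Formula) (hF : IsFamily F)
    (P1 P2 P3 Q1 Q2 Q3 : Finset ℕ)
    (hP12 : Disjoint P1 P2) (hP13 : Disjoint P1 P3) (hP23 : Disjoint P2 P3)
    (hQ12 : Disjoint Q1 Q2) (hQ13 : Disjoint Q1 Q3) (hQ23 : Disjoint Q2 Q3)
    (φ : Formula) (hφ : PQFormula (P1 ∪ P2) (Q1 ∪ Q2) φ)
    (M M' : KripkeModel)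
    (hMfin : Finite M.W) (hMtr : Transitive M.rel) (hMir : Irreflexive M.rel)
    (hM'fin : Finite M'.W) (hM'tr : Transitive M'.rel) (hM'ir : Irreflexive M'.rel)
    (w : M.W) (w' : M'.W) (m : ℕ)
    (h : Th F M (3 * φ.boxCount + 3) P2 Q2 w ⊆ Th F M' (3 * φ.boxCount + 3) P2 Q2 w') :
    ∃ Mst : KripkeModel, Finite Mst.W ∧ Transitive Mst.rel ∧ Irreflexive Mst.rel ∧
      ∃ wst : Mst.W,
        (∀ ψ ∈ φ.subfmls,
          (PQFormula (P1 ∪ P2) (Q1 ∪ Q2) ψ → M.Sat ψ w → Mst.Sat ψ wst) ∧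
          (PQFormula (Q1 ∪ Q2) (P1 ∪ P2) ψ → ¬M.Sat ψ w → ¬Mst.Sat ψ wst)) ∧
        Th F Mst m (P2 ∪ P3) (Q2 ∪ Q3) wst ⊆ Th F M' m (P2 ∪ P3) (Q2 ∪ Q3) w' := by
  classical
  haveI : Finite M.W := hMfin
  haveI : Finite M'.W := hM'fin
  haveI : Fintype M.W := Fintype.ofFinite M.W
  have hroot3 : GLAux.Below M M' P2 Q2 (3 * φ.boxCount + 3) w w' := by
    apply GLAux.below_of_members hF
    intro ρ hρ hρw
    exact (h ⟨hρ, hρw⟩).2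
  have hcard : (GLAux.Sval M φ w).card ≤ (GLAux.BxS φ).card :=
    Finset.card_le_card (GLAux.Sval_subset M φ w)
  have hbc : φ.boxCount = (GLAux.BxS φ).card := rfl
  have hrootG : GLAux.Good F M M' P2 Q2 φ (w', w) := by
    constructor
    · refine GLAux.below_mono ?_ hroot3
      show GLAux.REQ M φ w ≤ 3 * φ.boxCount + 3
      rw [GLAux.REQ, hbc]
      omega
    · refine hroot3 _ (GLAux.pq_box_iff.2 (GLAux.xi_pq hF M P2 Q2 φ _)) ?_
        (GLAux.box_xi_self F M P2 Q2 φ hMtr w)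
      show ((GLAux.xi F M P2 Q2 φ (GLAux.Sval M φ w)).box).depth ≤ 3 * φ.boxCount + 3
      have hd := GLAux.xi_depth hF M P2 Q2 φ (GLAux.Sval M φ w)
      have hb1 : ((GLAux.xi F M P2 Q2 φ (GLAux.Sval M φ w)).box).depth
          = (GLAux.xi F M P2 Q2 φ (GLAux.Sval M φ w)).depth + 1 := rfl
      rw [hb1, hbc]
      omega
  have hne : Nonempty {p : M'.W × M.W // GLAux.Good F M M' P2 Q2 φ p} := ⟨⟨(w', w), hrootG⟩⟩
  refine ⟨GLAux.MstM F M M' P1 P2 Q2 Q3 φ hne, ?_, ?_, ?_, ⟨(w', w), hrootG⟩, ?_, ?_⟩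
  · exact Subtype.finite
  · rintro a b c h1 h2
    exact ⟨hM'tr h1.1 h2.1, GLAux.tri_trans h1.2 h2.2⟩
  · rintro a h1
    exact hM'ir a.1.1 h1.1
  · intro ψ hmem
    have hT := GLAux.Tmain (P1 := P1) (Q1 := Q1) (Q3 := Q3) hF hMtr hMir hQ12 hQ13 hne ψ hmem
      ⟨(w', w), hrootG⟩
    exact ⟨hT.1, fun hpq hns hs => hns (hT.2 hpq hs)⟩
  · rintro θ ⟨hmemF, hsat⟩
    have hpq := ((hF m (P2 ∪ P3) (Q2 ∪ Q3)).1 θ hmemF).1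
    exact ⟨hmemF, (GLAux.Zmain (P1 := P1) (P3 := P3) (Q1 := Q1) (Q3 := Q3) hF hM'tr hP12 hP13
      hne θ ⟨(w', w), hrootG⟩).1 hpq hsat⟩
end
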